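/- arXiv:2302.07615 — 9 statements merged into one kernel-verified Lean document; each statement's English description precedes it below -/
import Mathlib

section
/- Fix integers n ≥ 1, q ≥ 1, d = q·n and reals γ > 0, 0 ≤ τ ≤ 1, 0 ≤ p ≤ 1, μ > 0, δ ≥ 0. Suppose Z, F_1, …, F_n, F satisfy Assumptions 1–3, and let z* ∈ Z be a solution of the VI for F on Z. Fix z, m, u ∈ Z, and let û ∈ Z be a solution of the VI on Z for the operator G(w) = F_1(w) − F_1(m) + F(m) + (1/γ)(w − z − τ(m − z)). For a permutation π of {1, …, d}, set z⁺(π) = proj_Z[u + γ·(1/n)∑_{i=1}^n Q_i^π(F_i(m) − F_1(m) − F_i(u) + F_1(u))]. Then, with E_π denoting the average over a uniformly random permutation π of {1, …, d}: E_π‖z⁺(π) − z*‖² + p‖z − z*‖² + (1 − p)‖m − z*‖² ≤ (1 − τ + p − γμ/2)‖z − z*‖² + (1 + τ − p − γμ/2)‖m − z*‖² + (2 + 4γδ²/μ + 4/(γμ) + 8γ²δ²)‖u − û‖² − (1 − τ − 3γμ/2)‖z − û‖² − (τ − 3γμ/2 − 8γ²δ²)‖m − û‖². -/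
open scoped RealInnerProductSpace

noncomputable section

/-- Permutation compressor `Q_i^π` (case `d = q·n`): for a permutation `π` of the
`d` coordinates, device `i` keeps the coordinates `π_j` for `j` in its block of
size `q` (0-indexed: `q·i ≤ j < q·(i+1)`) and rescales by `n`. -/
def Qperm (n q d : ℕ) (π : Equiv.Perm (Fin d)) (i : Fin n)
    (u : EuclideanSpace ℝ (Fin d)) : EuclideanSpace ℝ (Fin d) :=
  (n : ℝ) • ∑ j ∈ Finset.univ.filter
      (fun j : Fin d => q * (i : ℕ) ≤ (j : ℕ) ∧ (j : ℕ) < q * ((i : ℕ) + 1)),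
    EuclideanSpace.single (π j) (u (π j))

/- ============ auxiliary lemmas ============ -/

lemma young2 (t a b : ℝ) (ht : 0 < t) : 2*a*b ≤ t*a^2 + b^2/t := by
  have h : 0 ≤ (t*a - b)^2/t := div_nonneg (sq_nonneg _) ht.le
  have e : (t*a - b)^2/t = t*a^2 - 2*a*b + b^2/t := by
    field_simp
    ring
  linarith [e ▸ h]

lemma perm_sum_apply {d : ℕ} {M : Type*} [AddCommMonoid M] (f : Fin d → M) (j : Fin d) :
    ∑ π : Equiv.Perm (Fin d), f (π j) = (d-1).factorial • ∑ k, f k := by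
  cases d with
  | zero => exact j.elim0
  | succ e =>
    have h1 : ∑ π : Equiv.Perm (Fin (e+1)), f (π 0) = ∑ π : Equiv.Perm (Fin (e+1)), f (π j) := by
      apply Fintype.sum_equiv (Equiv.mulRight (Equiv.swap 0 j))
      intro π
      simp [Equiv.Perm.mul_apply, Equiv.swap_apply_right]
    have h2 : ∑ pe : Fin (e+1) × Equiv.Perm (Fin e), f pe.1
        = ∑ π : Equiv.Perm (Fin (e+1)), f (π 0) := by
      apply Fintype.sum_equiv Equiv.Perm.decomposeFin.symm
      intro pe
      rw [← Equiv.Perm.decomposeFin_symm_apply_zero pe.1 pe.2]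
    rw [← h1, ← h2, Fintype.sum_prod_type]
    simp [Finset.sum_const, Finset.smul_sum, Fintype.card_perm]

def blockOf (n q : ℕ) (j : Fin (q * n)) : Fin n := by
  refine ⟨(j : ℕ) / q, ?_⟩
  have hj := j.2
  rcases Nat.eq_zero_or_pos q with h | h
  · subst h; simp at hj
  · exact (Nat.div_lt_iff_lt_mul h).mpr (lt_of_lt_of_eq hj (mul_comm q n))

lemma blockOf_iff {n q : ℕ} (j : Fin (q * n)) (i : Fin n) :
    (q * (i : ℕ) ≤ (j : ℕ) ∧ (j : ℕ) < q * ((i : ℕ) + 1)) ↔ blockOf n q j = i := by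
  have hq : 0 < q := by
    rcases Nat.eq_zero_or_pos q with h | h
    · exfalso; have hj := j.2; subst h; simp at hj
    · exact h
  rw [Fin.ext_iff]
  show _ ↔ (j : ℕ) / q = (i : ℕ)
  constructor
  · rintro ⟨h1, h2⟩
    exact Nat.div_eq_of_lt_le (by linarith [mul_comm q (i:ℕ)] ) (by
      calc (j:ℕ) < q * ((i:ℕ)+1) := h2
        _ = ((i:ℕ)+1) * q := mul_comm _ _)
  · intro hji
    rw [← hji]
    constructor
    · calc q * ((j:ℕ)/q) = (j:ℕ)/q * q := mul_comm _ _
        _ ≤ (j:ℕ) := Nat.div_mul_le_self _ _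
    · have h1 := Nat.div_add_mod (j : ℕ) q
      have h2 := Nat.mod_lt (j : ℕ) hq
      calc (j:ℕ) = q * ((j:ℕ)/q) + (j:ℕ) % q := h1.symm
        _ < q * ((j:ℕ)/q) + q := by omega
        _ = q * ((j:ℕ)/q + 1) := by ring

lemma sum_comp_blockOf {M : Type*} [AddCommMonoid M] {n q : ℕ} (g : Fin n → M) :
    ∑ j : Fin (q * n), g (blockOf n q j) = q • ∑ i, g i := by
  have key : ∀ (i : Fin n) (c : Fin q), q * (i : ℕ) + (c : ℕ) < q * n := by
    intro i c
    calc q * (i:ℕ) + (c:ℕ) < q * (i:ℕ) + q := by omega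
      _ = q * ((i:ℕ)+1) := by ring
      _ ≤ q * n := Nat.mul_le_mul_left q i.2
  set e : Fin n × Fin q → Fin (q * n) := fun p => ⟨q * (p.1 : ℕ) + (p.2 : ℕ), key p.1 p.2⟩ with he
  have hdiv : ∀ (i : Fin n) (c : Fin q), (q * (i:ℕ) + (c:ℕ)) / q = (i:ℕ) := by
    intro i c
    have hq : 0 < q := c.pos
    rw [Nat.mul_add_div hq, Nat.div_eq_of_lt c.2]; omega
  have hinj : Function.Injective e := by
    rintro ⟨i, c⟩ ⟨i', c'⟩ h
    rw [he] at h
    have hv : q * (i:ℕ) + (c:ℕ) = q * (i':ℕ) + (c':ℕ) := congrArg Fin.val h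
    have hi : (i:ℕ) = (i':ℕ) := by
      rw [← hdiv i c, ← hdiv i' c', hv]
    have : (c:ℕ) = (c':ℕ) := by
      rw [hi] at hv; omega
    exact Prod.ext (Fin.ext hi) (Fin.ext this)
  have hbij : Function.Bijective e := by
    rw [Fintype.bijective_iff_injective_and_card]
    exact ⟨hinj, by simp [mul_comm]⟩
  have := Fintype.sum_bijective e hbij (fun p => g p.1) (fun j => g (blockOf n q j))
    (by rintro ⟨i, c⟩
        show g i = g (blockOf n q ⟨q * (i:ℕ) + (c:ℕ), key i c⟩)
        congr 1
        apply Fin.ext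
        show (i : ℕ) = (q * (i:ℕ) + (c:ℕ)) / q
        rw [hdiv])
  rw [← this, Fintype.sum_prod_type]
  simp [Finset.sum_const]
  rw [Finset.smul_sum]

lemma sum_single_coords {D : ℕ} (x : EuclideanSpace ℝ (Fin D)) :
    ∑ k : Fin D, EuclideanSpace.single k (x k) = x := by
  ext j
  rw [WithLp.ofLp_sum, Finset.sum_apply]
  simp [EuclideanSpace.single_apply]

lemma single_sum_apply {D : ℕ} (π : Equiv.Perm (Fin D)) (c : Fin D → ℝ) (k : Fin D) :
    (∑ j : Fin D, EuclideanSpace.single (π j) (c j)) k = c (π⁻¹ k) := by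
  rw [WithLp.ofLp_sum, Finset.sum_apply]
  rw [Finset.sum_eq_single (π⁻¹ k)]
  · simp [EuclideanSpace.single_apply]
  · intro j _ hj
    have : k ≠ π j := by
      intro h
      exact hj (by simp [h])
    simp [EuclideanSpace.single_apply, this]
  · simp

lemma norm_sq_eq_sum {D : ℕ} (x : EuclideanSpace ℝ (Fin D)) :
    ‖x‖ ^ 2 = ∑ k, (x k) ^ 2 := by
  rw [EuclideanSpace.norm_eq, Real.sq_sqrt (by positivity)]
  simp [Real.norm_eq_abs, sq_abs]

lemma Qsum_eq {n q : ℕ} (hn : 1 ≤ n) (π : Equiv.Perm (Fin (q * n)))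
    (y : Fin n → EuclideanSpace ℝ (Fin (q * n))) :
    (n : ℝ)⁻¹ • ∑ i, Qperm n q (q * n) π i (y i)
      = ∑ j : Fin (q * n), EuclideanSpace.single (π j) (y (blockOf n q j) (π j)) := by
  have hn' : (n : ℝ) ≠ 0 := by positivity
  unfold Qperm
  rw [← Finset.smul_sum, smul_smul, inv_mul_cancel₀ hn', one_smul]
  rw [← Finset.sum_fiberwise Finset.univ (blockOf n q)
    (fun j => EuclideanSpace.single (π j) (y (blockOf n q j) (π j)))]
  apply Finset.sum_congr rfl
  intro i _
  rw [Finset.sum_congr (g := fun j => EuclideanSpace.single (π j) (y (blockOf n q j) (π j)))]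
  · apply Finset.ext
    intro j
    simp only [Finset.mem_filter, Finset.mem_univ, true_and]
    exact blockOf_iff j i
  · intro j hj
    simp only [Finset.mem_filter, Finset.mem_univ, true_and] at hj
    rw [hj]

lemma Qsum_mean {n q : ℕ} (hn : 1 ≤ n)
    (y : Fin n → EuclideanSpace ℝ (Fin (q * n))) :
    ∑ π : Equiv.Perm (Fin (q * n)), (n : ℝ)⁻¹ • ∑ i, Qperm n q (q * n) π i (y i)
      = ((q * n - 1).factorial * q) • ∑ i, y i := by
  calc ∑ π : Equiv.Perm (Fin (q * n)), (n : ℝ)⁻¹ • ∑ i, Qperm n q (q * n) π i (y i)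
      = ∑ π : Equiv.Perm (Fin (q * n)), ∑ j : Fin (q * n),
          EuclideanSpace.single (π j) (y (blockOf n q j) (π j)) := by
        exact Finset.sum_congr rfl (fun π _ => Qsum_eq hn π y)
    _ = ∑ j : Fin (q * n), ∑ π : Equiv.Perm (Fin (q * n)),
          (fun k => EuclideanSpace.single k (y (blockOf n q j) k)) (π j) := Finset.sum_comm
    _ = ∑ j : Fin (q * n), (q * n - 1).factorial •
          ∑ k, EuclideanSpace.single k (y (blockOf n q j) k) := by
        exact Finset.sum_congr rfl (fun j _ =>
          perm_sum_apply (fun k => EuclideanSpace.single k (y (blockOf n q j) k)) j)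
    _ = ∑ j : Fin (q * n), (q * n - 1).factorial • y (blockOf n q j) := by
        exact Finset.sum_congr rfl (fun j _ => by rw [sum_single_coords])
    _ = (q * n - 1).factorial • (q • ∑ i, y i) := by
        rw [← Finset.smul_sum, sum_comp_blockOf]
    _ = ((q * n - 1).factorial * q) • ∑ i, y i := by rw [smul_smul]

lemma Qsum_moment {n q : ℕ} (hn : 1 ≤ n)
    (y : Fin n → EuclideanSpace ℝ (Fin (q * n))) :
    ∑ π : Equiv.Perm (Fin (q * n)),
        ‖(n : ℝ)⁻¹ • ∑ i, Qperm n q (q * n) π i (y i)‖ ^ 2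
      = ((q * n - 1).factorial * q) • ∑ i, ‖y i‖ ^ 2 := by
  calc ∑ π : Equiv.Perm (Fin (q * n)), ‖(n : ℝ)⁻¹ • ∑ i, Qperm n q (q * n) π i (y i)‖ ^ 2
      = ∑ π : Equiv.Perm (Fin (q * n)), ∑ k, (y (blockOf n q (π⁻¹ k)) k) ^ 2 := by
        refine Finset.sum_congr rfl (fun π _ => ?_)
        rw [Qsum_eq hn π y, norm_sq_eq_sum]
        refine Finset.sum_congr rfl (fun k _ => ?_)
        rw [single_sum_apply]
        rw [Equiv.Perm.coe_inv, Equiv.apply_symm_apply]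
    _ = ∑ k, ∑ π : Equiv.Perm (Fin (q * n)), (y (blockOf n q (π⁻¹ k)) k) ^ 2 :=
        Finset.sum_comm
    _ = ∑ k, ∑ π : Equiv.Perm (Fin (q * n)), (fun t => (y (blockOf n q t) k) ^ 2) (π k) := by
        refine Finset.sum_congr rfl (fun k _ => ?_)
        exact Fintype.sum_equiv (Equiv.inv (Equiv.Perm (Fin (q * n))))
          _ _ (fun π => rfl)
    _ = ∑ k, (q * n - 1).factorial • ∑ t, (y (blockOf n q t) k) ^ 2 := by
        exact Finset.sum_congr rfl (fun k _ =>
          perm_sum_apply (fun t => (y (blockOf n q t) k) ^ 2) k)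
    _ = (q * n - 1).factorial • ∑ t, ∑ k, (y (blockOf n q t) k) ^ 2 := by
        rw [← Finset.smul_sum, Finset.sum_comm]
    _ = (q * n - 1).factorial • ∑ t, ‖y (blockOf n q t)‖ ^ 2 := by
        rw [Finset.sum_congr rfl (fun t _ => (norm_sq_eq_sum (y (blockOf n q t))).symm)]
    _ = (q * n - 1).factorial • (q • ∑ i, ‖y i‖ ^ 2) := by
        rw [sum_comp_blockOf (fun i => ‖y i‖ ^ 2)]
    _ = ((q * n - 1).factorial * q) • ∑ i, ‖y i‖ ^ 2 := by rw [smul_smul]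

/- ============ main theorem ============ -/

set_option maxHeartbeats 2000000 in
/-- one-iteration descent inequality of the Three Pillars Algorithm
with permutation compression (Lemma 2 of the paper). Here `û` is the exact
solution of the server subproblem and `z⁺(π)` the compressed update, and the
left-hand side includes the expectation `p‖z − z*‖² + (1−p)‖m − z*‖²` of
`‖m⁺ − z*‖²`. -/
theorem one_iteration_descent_compression
    (n q d : ℕ) (hn : 1 ≤ n) (hq : 1 ≤ q) (hd : d = q * n)
    (γ τ p μ δ L : ℝ)
    (hγ : 0 < γ) (hτ0 : 0 ≤ τ) (hτ1 : τ ≤ 1) (hp0 : 0 ≤ p) (hp1 : p ≤ 1)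
    (hμ : 0 < μ) (hδ : 0 ≤ δ)
    (Z : Set (EuclideanSpace ℝ (Fin d)))
    (hZne : Z.Nonempty) (hZcl : IsClosed Z) (hZcv : Convex ℝ Z)
    (proj : EuclideanSpace ℝ (Fin d) → EuclideanSpace ℝ (Fin d))
    (hprojmem : ∀ x, proj x ∈ Z)
    (hproj : ∀ x, ∀ y ∈ Z, ⟪x - proj x, y - proj x⟫ ≤ 0)
    (Fi : Fin n → EuclideanSpace ℝ (Fin d) → EuclideanSpace ℝ (Fin d))
    (F : EuclideanSpace ℝ (Fin d) → EuclideanSpace ℝ (Fin d))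
    (hF : ∀ w, F w = (n : ℝ)⁻¹ • ∑ i, Fi i w)
    (F1 : EuclideanSpace ℝ (Fin d) → EuclideanSpace ℝ (Fin d))
    (hF1 : F1 = Fi ⟨0, hn⟩)
    (hLip : ∀ i, ∀ u ∈ Z, ∀ v ∈ Z, ‖Fi i u - Fi i v‖ ≤ L * ‖u - v‖)
    (hmono : ∀ i, ∀ u ∈ Z, ∀ v ∈ Z, 0 ≤ ⟪Fi i u - Fi i v, u - v⟫)
    (hstrong : ∀ u ∈ Z, ∀ v ∈ Z, μ * ‖u - v‖ ^ 2 ≤ ⟪F u - F v, u - v⟫)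
    (hrel : ∀ i, ∀ u ∈ Z, ∀ v ∈ Z,
      ‖(Fi i u - F u) - (Fi i v - F v)‖ ≤ δ * ‖u - v‖)
    (zstar : EuclideanSpace ℝ (Fin d)) (hzstar : zstar ∈ Z)
    (hVI : ∀ w ∈ Z, 0 ≤ ⟪F zstar, w - zstar⟫)
    (z m u : EuclideanSpace ℝ (Fin d)) (hz : z ∈ Z) (hm : m ∈ Z) (hu : u ∈ Z)
    (G : EuclideanSpace ℝ (Fin d) → EuclideanSpace ℝ (Fin d))
    (hG : ∀ w, G w = F1 w - F1 m + F m + (1 / γ) • (w - z - τ • (m - z)))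
    (uhat : EuclideanSpace ℝ (Fin d)) (huhat : uhat ∈ Z)
    (hVIhat : ∀ w ∈ Z, 0 ≤ ⟪G uhat, w - uhat⟫)
    (zplus : Equiv.Perm (Fin d) → EuclideanSpace ℝ (Fin d))
    (hzplus : ∀ π, zplus π = proj (u + γ • ((n : ℝ)⁻¹ •
      ∑ i, Qperm n q d π i (Fi i m - F1 m - Fi i u + F1 u)))) :
    (Fintype.card (Equiv.Perm (Fin d)) : ℝ)⁻¹ *
          ∑ π : Equiv.Perm (Fin d), ‖zplus π - zstar‖ ^ 2
        + p * ‖z - zstar‖ ^ 2 + (1 - p) * ‖m - zstar‖ ^ 2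
      ≤ (1 - τ + p - γ * μ / 2) * ‖z - zstar‖ ^ 2
        + (1 + τ - p - γ * μ / 2) * ‖m - zstar‖ ^ 2
        + (2 + 4 * γ * δ ^ 2 / μ + 4 / (γ * μ) + 8 * γ ^ 2 * δ ^ 2) * ‖u - uhat‖ ^ 2
        - (1 - τ - 3 * γ * μ / 2) * ‖z - uhat‖ ^ 2
        - (τ - 3 * γ * μ / 2 - 8 * γ ^ 2 * δ ^ 2) * ‖m - uhat‖ ^ 2 := by
  subst hd
  have hn0 : (0:ℝ) < n := by exact_mod_cast hn
  have hγμ : 0 < γ * μ := mul_pos hγ hμ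
  set i0 : Fin n := ⟨0, hn⟩ with hi0
  set hv : EuclideanSpace ℝ (Fin (q*n)) := F m - F1 m - (F u - F1 u) with hhv
  set ht : EuclideanSpace ℝ (Fin (q*n)) := F1 uhat - F1 m + F m - F uhat with hhtdef
  set S : EuclideanSpace ℝ (Fin (q*n)) := z + τ • (m - z) with hSdef
  set N : ℝ := (Fintype.card (Equiv.Perm (Fin (q*n))) : ℝ) with hN
  set K : ℕ := (q*n - 1).factorial * q with hK
  have hqn1 : 1 ≤ q * n := by
    have := Nat.mul_le_mul hq hn; omega
  have hfac : (q*n).factorial = (q*n) * (q*n - 1).factorial := by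
    conv_lhs => rw [show q*n = (q*n-1)+1 by omega]
    rw [Nat.factorial_succ]
    congr 2
    omega
  have hNval : N = (n : ℝ) * (K : ℝ) := by
    rw [hN, hK, Fintype.card_perm, Fintype.card_fin, hfac]
    push_cast
    ring
  have hNpos : 0 < N := by
    rw [hN]; exact_mod_cast Fintype.card_pos
  have hKpos : (0:ℝ) < (K:ℝ) := by
    have : 0 < K := Nat.mul_pos (Nat.factorial_pos _) (by omega)
    exact_mod_cast this
  -- the sampled direction
  set yv : Fin n → EuclideanSpace ℝ (Fin (q*n)) :=
    fun i => Fi i m - F1 m - Fi i u + F1 u with hyv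
  set Tf : Equiv.Perm (Fin (q*n)) → EuclideanSpace ℝ (Fin (q*n)) :=
    fun π => (n : ℝ)⁻¹ • ∑ i, Qperm n q (q*n) π i (yv i) with hTf
  have hzplus' : ∀ π, zplus π = proj (u + γ • Tf π) := by
    intro π
    rw [hzplus π, hTf, hyv]
  have hmean' : ∑ π : Equiv.Perm (Fin (q*n)), Tf π = K • ∑ i, yv i := by
    rw [hTf, hK]
    exact Qsum_mean hn yv
  have hmom' : ∑ π : Equiv.Perm (Fin (q*n)), ‖Tf π‖^2 = K • ∑ i, ‖yv i‖^2 := by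
    rw [hTf, hK]
    exact Qsum_moment hn yv
  have hFm : (∑ i, Fi i m) = (n:ℝ) • F m := by
    rw [hF m, smul_smul, mul_inv_cancel₀ (ne_of_gt hn0), one_smul]
  have hFu : (∑ i, Fi i u) = (n:ℝ) • F u := by
    rw [hF u, smul_smul, mul_inv_cancel₀ (ne_of_gt hn0), one_smul]
  have hsy : ∑ i, yv i = (n:ℝ) • hv := by
    have h1 : ∑ i, yv i
        = (∑ i, Fi i m) - (n:ℝ) • F1 m - (∑ i, Fi i u) + (n:ℝ) • F1 u := by
      rw [hyv]
      rw [Finset.sum_add_distrib, Finset.sum_sub_distrib, Finset.sum_sub_distrib,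
        Finset.sum_const, Finset.sum_const, Finset.card_univ, Fintype.card_fin,
        ← Nat.cast_smul_eq_nsmul ℝ n (F1 m), ← Nat.cast_smul_eq_nsmul ℝ n (F1 u)]
    rw [h1, hFm, hFu, hhv]
    module
  -- projection bound
  have hproj2 : ∀ x : EuclideanSpace ℝ (Fin (q*n)), ‖proj x - zstar‖^2 ≤ ‖x - zstar‖^2 := by
    intro x
    have h1 := hproj x zstar hzstar
    have e2 : zstar - proj x = -(proj x - zstar) := by abel
    rw [e2, inner_neg_right] at h1
    have e : x - zstar = (x - proj x) + (proj x - zstar) := by abel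
    rw [e, norm_add_sq_real]
    linarith only [h1, sq_nonneg ‖x - proj x‖]
  -- one-step expansion
  have hstep : ∀ X : EuclideanSpace ℝ (Fin (q*n)),
      ‖proj (u + γ • X) - zstar‖^2
        ≤ ‖u - zstar‖^2 + 2*γ*⟪X, u - zstar⟫ + γ^2*‖X‖^2 := by
    intro X
    refine le_trans (hproj2 _) ?_
    have e : (u + γ • X) - zstar = (u - zstar) + γ • X := by abel
    rw [e, norm_add_sq_real, real_inner_smul_right, norm_smul, Real.norm_eq_abs,
      mul_pow, sq_abs, real_inner_comm (u - zstar) X]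
    linarith only []
  -- expectation bound
  have hsum : ∑ π : Equiv.Perm (Fin (q*n)), ‖zplus π - zstar‖^2
      ≤ N*‖u - zstar‖^2 + 2*γ*((K:ℝ)*⟪∑ i, yv i, u - zstar⟫)
        + γ^2*((K:ℝ)* ∑ i, ‖yv i‖^2) := by
    calc ∑ π : Equiv.Perm (Fin (q*n)), ‖zplus π - zstar‖^2
        ≤ ∑ π : Equiv.Perm (Fin (q*n)),
            (‖u - zstar‖^2 + 2*γ*⟪Tf π, u - zstar⟫ + γ^2*‖Tf π‖^2) := by
          refine Finset.sum_le_sum (fun π _ => ?_)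
          rw [hzplus' π]
          exact hstep _
      _ = N*‖u - zstar‖^2
            + 2*γ*⟪∑ π : Equiv.Perm (Fin (q*n)), Tf π, u - zstar⟫
            + γ^2*(∑ π : Equiv.Perm (Fin (q*n)), ‖Tf π‖^2) := by
          rw [Finset.sum_add_distrib, Finset.sum_add_distrib, Finset.sum_const,
            Finset.card_univ, sum_inner, ← Finset.mul_sum, ← Finset.mul_sum,
            nsmul_eq_mul, hN]
      _ = N*‖u - zstar‖^2 + 2*γ*((K:ℝ)*⟪∑ i, yv i, u - zstar⟫)
            + γ^2*((K:ℝ)* ∑ i, ‖yv i‖^2) := by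
          rw [hmean', hmom', ← Nat.cast_smul_eq_nsmul ℝ K (∑ i, yv i),
            ← Nat.cast_smul_eq_nsmul ℝ K (∑ i, ‖yv i‖^2),
            real_inner_smul_left, smul_eq_mul]
  -- second moment bound
  have hmom2 : (K:ℝ) * ∑ i, ‖yv i‖^2
      ≤ (K:ℝ) * ((n:ℝ) * (2*δ^2*‖m - u‖^2)) := by
    refine mul_le_mul_of_nonneg_left ?_ hKpos.le
    set w : Fin n → EuclideanSpace ℝ (Fin (q*n)) := fun i => (Fi i m - F m) - (Fi i u - F u) with hw
    have hyw : ∀ i, yv i = w i - w i0 := by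
      intro i
      rw [hyv, hw, hF1, hi0]
      beta_reduce
      abel
    have hwsum : ∑ i, w i = 0 := by
      rw [hw, Finset.sum_sub_distrib, Finset.sum_sub_distrib, Finset.sum_sub_distrib,
        Finset.sum_const, Finset.sum_const, Finset.card_univ, Fintype.card_fin,
        ← Nat.cast_smul_eq_nsmul ℝ n (F m), ← Nat.cast_smul_eq_nsmul ℝ n (F u), hFm, hFu]
      abel
    have hwn : ∀ i, ‖w i‖^2 ≤ δ^2*‖m - u‖^2 := by
      intro i
      have h2 : ‖w i‖ ≤ δ * ‖m - u‖ := hrel i m hm u hu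
      calc ‖w i‖^2 ≤ (δ*‖m - u‖)^2 := pow_le_pow_left₀ (norm_nonneg _) h2 2
        _ = δ^2*‖m - u‖^2 := by ring
    have hexpand : ∑ i, ‖yv i‖^2
        = ∑ i, ‖w i‖^2 - 2*⟪∑ i, w i, w i0⟫ + (n:ℝ)*‖w i0‖^2 := by
      have h1 : ∀ i, ‖yv i‖^2
          = ‖w i‖^2 - 2*⟪w i, w i0⟫ + ‖w i0‖^2 := by
        intro i
        rw [hyw i, norm_sub_sq_real]
      rw [Finset.sum_congr rfl (fun i _ => h1 i), Finset.sum_add_distrib,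
        Finset.sum_sub_distrib, Finset.sum_const, Finset.card_univ, Fintype.card_fin,
        ← Finset.mul_sum, nsmul_eq_mul, ← sum_inner]
    rw [hexpand, hwsum, inner_zero_left]
    have h3 : ∑ i, ‖w i‖^2 ≤ (n:ℝ) * (δ^2*‖m - u‖^2) := by
      calc ∑ i, ‖w i‖^2 ≤ ∑ _i : Fin n, δ^2*‖m - u‖^2 :=
            Finset.sum_le_sum (fun i _ => hwn i)
        _ = (n:ℝ) * (δ^2*‖m - u‖^2) := by
            rw [Finset.sum_const, Finset.card_univ, Fintype.card_fin, nsmul_eq_mul]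
    have h4 := hwn i0
    have h5 := mul_le_mul_of_nonneg_left h4 hn0.le
    linarith only [h3, h5]
  -- main expectation estimate
  have hP : N⁻¹ * ∑ π : Equiv.Perm (Fin (q*n)), ‖zplus π - zstar‖^2
      ≤ ‖u - zstar‖^2 + 2*γ*⟪hv, u - zstar⟫ + 2*γ^2*δ^2*‖m - u‖^2 := by
    have h1 : ∑ π : Equiv.Perm (Fin (q*n)), ‖zplus π - zstar‖^2
        ≤ N*‖u - zstar‖^2 + 2*γ*((K:ℝ)*((n:ℝ)*⟪hv, u - zstar⟫))
          + γ^2*((K:ℝ)*((n:ℝ)*(2*δ^2*‖m - u‖^2))) := by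
      have hinner : ⟪∑ i, yv i, u - zstar⟫ = (n:ℝ)*⟪hv, u - zstar⟫ := by
        rw [hsy, real_inner_smul_left]
      have hh := hsum
      rw [hinner] at hh
      have h6 := mul_le_mul_of_nonneg_left hmom2 (sq_nonneg γ)
      linarith only [hh, h6]
    have h2 := mul_le_mul_of_nonneg_left h1 (inv_nonneg.mpr hNpos.le)
    have hNe : N ≠ 0 := ne_of_gt hNpos
    have e : N⁻¹ * (N*‖u - zstar‖^2 + 2*γ*((K:ℝ)*((n:ℝ)*⟪hv, u - zstar⟫))
          + γ^2*((K:ℝ)*((n:ℝ)*(2*δ^2*‖m - u‖^2))))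
        = ‖u - zstar‖^2 + 2*γ*⟪hv, u - zstar⟫ + 2*γ^2*δ^2*‖m - u‖^2 := by
      rw [hNval]
      have hKne : (K:ℝ) ≠ 0 := ne_of_gt hKpos
      have hnne : (n:ℝ) ≠ 0 := ne_of_gt hn0
      field_simp
    rw [e] at h2
    exact h2
  -- ======== deterministic part ========
  -- abbreviations for squared norms are kept implicit; we list the inequalities
  have hd1 : ‖u - zstar‖^2 = ‖uhat - zstar‖^2 + 2*⟪u - uhat, uhat - zstar⟫ + ‖u - uhat‖^2 := by
    have e : u - zstar = (u - uhat) + (uhat - zstar) := by abel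
    rw [e, norm_add_sq_real]
    ring
  have hd2 : 2*γ*⟪hv, u - zstar⟫ = 2*γ*⟪hv, u - uhat⟫ + 2*γ*⟪hv, uhat - zstar⟫ := by
    have e : u - zstar = (u - uhat) + (uhat - zstar) := by abel
    rw [e, inner_add_right]
    ring
  -- VI for the subproblem
  have hVIu : 0 ≤ ⟪F uhat, zstar - uhat⟫ + ⟪ht, zstar - uhat⟫
      + (1/γ)*⟪uhat - S, zstar - uhat⟫ := by
    have h0 := hVIhat zstar hzstar
    rw [hG uhat] at h0
    have e : F1 uhat - F1 m + F m + (1 / γ) • (uhat - z - τ • (m - z))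
        = (F uhat + ht) + (1/γ) • (uhat - S) := by
      rw [hhtdef, hSdef]
      module
    rw [e, inner_add_left, inner_add_left, real_inner_smul_left] at h0
    linarith only [h0]
  -- three-point identity
  have hd5 : 2*⟪uhat - S, zstar - uhat⟫
      = ‖S - zstar‖^2 - ‖uhat - S‖^2 - ‖uhat - zstar‖^2 := by
    have e5a : (uhat - S) - (uhat - zstar) = zstar - S := by abel
    have e5b := norm_sub_sq_real (uhat - S) (uhat - zstar)
    rw [e5a] at e5b
    have e5c : zstar - uhat = -(uhat - zstar) := by abel
    rw [e5c, inner_neg_right]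
    have e5d : ‖zstar - S‖^2 = ‖S - zstar‖^2 := by rw [norm_sub_rev]
    linarith only [e5b, e5d]
  -- strong monotonicity + VI at zstar
  have hd6 : ⟪F uhat, zstar - uhat⟫ ≤ -μ*‖uhat - zstar‖^2 := by
    have h1 := hstrong uhat huhat zstar hzstar
    have h2 := hVI uhat huhat
    have e1 : zstar - uhat = -(uhat - zstar) := by abel
    rw [e1, inner_neg_right]
    have e2 : ⟪F uhat - F zstar, uhat - zstar⟫
        = ⟪F uhat, uhat - zstar⟫ - ⟪F zstar, uhat - zstar⟫ := by
      rw [inner_sub_left]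
    linarith only [h1, h2, e2]
  -- convexity identities
  have hd7 : ‖S - zstar‖^2 = (1-τ)*‖z - zstar‖^2 + τ*‖m - zstar‖^2
      - τ*(1-τ)*‖z - m‖^2 := by
    have e1 : S - zstar = (z - zstar) + τ•((m - zstar) - (z - zstar)) := by
      rw [hSdef]; module
    have e2 : z - m = (z - zstar) - (m - zstar) := by abel
    rw [e1, e2, norm_add_sq_real, real_inner_smul_right, inner_sub_right,
      real_inner_self_eq_norm_sq, norm_smul, Real.norm_eq_abs, mul_pow, sq_abs,
      norm_sub_sq_real (z - zstar) (m - zstar), norm_sub_sq_real (m - zstar) (z - zstar),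
      real_inner_comm (m - zstar) (z - zstar)]
    ring
  have hd8 : ‖uhat - S‖^2 = (1-τ)*‖uhat - z‖^2 + τ*‖uhat - m‖^2
      - τ*(1-τ)*‖z - m‖^2 := by
    have e1 : uhat - S = (uhat - z) + τ•((uhat - m) - (uhat - z)) := by
      rw [hSdef]; module
    have e2 : z - m = (uhat - m) - (uhat - z) := by abel
    rw [e1, e2, norm_add_sq_real, real_inner_smul_right, inner_sub_right,
      real_inner_self_eq_norm_sq, norm_smul, Real.norm_eq_abs, mul_pow, sq_abs,
      norm_sub_sq_real (uhat - m) (uhat - z),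
      real_inner_comm (uhat - m) (uhat - z)]
    ring
  have hzh : ‖uhat - z‖ = ‖z - uhat‖ := norm_sub_rev _ _
  have hmh : ‖uhat - m‖ = ‖m - uhat‖ := norm_sub_rev _ _
  -- delta-relatedness bounds
  have hnt : ‖ht‖ ≤ δ*‖m - uhat‖ := by
    have h := hrel i0 uhat huhat m hm
    have e : ht = (Fi i0 uhat - F uhat) - (Fi i0 m - F m) := by
      rw [hhtdef, hF1, hi0]; abel
    rw [e]
    calc ‖(Fi i0 uhat - F uhat) - (Fi i0 m - F m)‖ ≤ δ*‖uhat - m‖ := h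
      _ = δ*‖m - uhat‖ := by rw [hmh]
  have hnd : ‖hv - ht‖ ≤ δ*‖u - uhat‖ := by
    have h := hrel i0 uhat huhat u hu
    have e : hv - ht = -((Fi i0 uhat - F uhat) - (Fi i0 u - F u)) := by
      rw [hhv, hhtdef, hF1, hi0]; abel
    rw [e, norm_neg]
    calc ‖(Fi i0 uhat - F uhat) - (Fi i0 u - F u)‖ ≤ δ*‖uhat - u‖ := h
      _ = δ*‖u - uhat‖ := by rw [norm_sub_rev]
  -- Young inequalities
  have h11 : 2*⟪u - uhat, uhat - zstar⟫
      ≤ γ*μ/4*‖uhat - zstar‖^2 + 4/(γ*μ)*‖u - uhat‖^2 := by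
    have hc := real_inner_le_norm (u - uhat) (uhat - zstar)
    have hy := young2 (γ*μ/4) ‖uhat - zstar‖ ‖u - uhat‖ (by positivity)
    have he : ‖u - uhat‖^2/(γ*μ/4) = 4/(γ*μ)*‖u - uhat‖^2 := by
      field_simp
    linarith only [hc, hy, he]
  have h12 : 2*γ*⟪hv - ht, uhat - zstar⟫
      ≤ γ*μ/4*‖uhat - zstar‖^2 + 4*γ*δ^2/μ*‖u - uhat‖^2 := by
    have hc : ⟪hv - ht, uhat - zstar⟫ ≤ δ*‖u - uhat‖*‖uhat - zstar‖ := by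
      calc ⟪hv - ht, uhat - zstar⟫ ≤ ‖hv - ht‖*‖uhat - zstar‖ := real_inner_le_norm _ _
        _ ≤ δ*‖u - uhat‖*‖uhat - zstar‖ :=
            mul_le_mul_of_nonneg_right hnd (norm_nonneg _)
    have hc2 := mul_le_mul_of_nonneg_left hc (by positivity : (0:ℝ) ≤ 2*γ)
    have hy := young2 (γ*μ/4) ‖uhat - zstar‖ (γ*δ*‖u - uhat‖) (by positivity)
    have he : (γ*δ*‖u - uhat‖)^2/(γ*μ/4) = 4*γ*δ^2/μ*‖u - uhat‖^2 := by
      field_simp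
    linarith only [hc2, hy, he]
  have h1314 : 2*γ*⟪hv, u - uhat⟫
      ≤ 4*γ^2*δ^2*‖m - uhat‖^2 + ‖u - uhat‖^2/4 + 2*γ*δ*‖u - uhat‖^2 := by
    have hsplit : ⟪hv, u - uhat⟫ = ⟪ht, u - uhat⟫ + ⟪hv - ht, u - uhat⟫ := by
      have hsl := inner_sub_left (𝕜 := ℝ) hv ht (u - uhat)
      linarith only [hsl]
    have hc1 : ⟪ht, u - uhat⟫ ≤ δ*‖m - uhat‖*‖u - uhat‖ := by
      calc ⟪ht, u - uhat⟫ ≤ ‖ht‖*‖u - uhat‖ := real_inner_le_norm _ _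
        _ ≤ δ*‖m - uhat‖*‖u - uhat‖ := mul_le_mul_of_nonneg_right hnt (norm_nonneg _)
    have hc2 : ⟪hv - ht, u - uhat⟫ ≤ δ*‖u - uhat‖*‖u - uhat‖ := by
      calc ⟪hv - ht, u - uhat⟫ ≤ ‖hv - ht‖*‖u - uhat‖ := real_inner_le_norm _ _
        _ ≤ δ*‖u - uhat‖*‖u - uhat‖ := mul_le_mul_of_nonneg_right hnd (norm_nonneg _)
    have hy := young2 4 (γ*δ*‖m - uhat‖) ‖u - uhat‖ (by norm_num)
    have hg1 := mul_le_mul_of_nonneg_left hc1 (by positivity : (0:ℝ) ≤ 2*γ)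
    have hg2 := mul_le_mul_of_nonneg_left hc2 (by positivity : (0:ℝ) ≤ 2*γ)
    rw [hsplit]
    have hd : 2*γ*(⟪ht, u - uhat⟫ + ⟪hv - ht, u - uhat⟫)
        = 2*γ*⟪ht, u - uhat⟫ + 2*γ*⟪hv - ht, u - uhat⟫ := by ring
    linarith only [hd, hg1, hg2, hy]
  have h15 : 2*γ*δ*‖u - uhat‖^2 ≤ (3/4)*‖u - uhat‖^2 + 4*γ^2*δ^2*‖u - uhat‖^2 := by
    nlinarith only [sq_nonneg (2*γ*δ - 1/2), sq_nonneg ‖u - uhat‖]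
  have h16 : 2*γ^2*δ^2*‖m - u‖^2
      ≤ 4*γ^2*δ^2*‖m - uhat‖^2 + 4*γ^2*δ^2*‖u - uhat‖^2 := by
    have e : m - u = (m - uhat) + (uhat - u) := by abel
    have h := norm_add_sq_real (m - uhat) (uhat - u)
    rw [← e] at h
    have hc := real_inner_le_norm (m - uhat) (uhat - u)
    have h2 : ‖m - u‖^2 ≤ 2*‖m - uhat‖^2 + 2*‖uhat - u‖^2 := by
      linarith only [h, hc, sq_nonneg (‖m - uhat‖ - ‖uhat - u‖)]
    have e2 : ‖uhat - u‖ = ‖u - uhat‖ := norm_sub_rev _ _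
    rw [e2] at h2
    have h6 := mul_le_mul_of_nonneg_left h2 (by positivity : (0:ℝ) ≤ 2*γ^2*δ^2)
    linarith only [h6]
  have h17 : γ*μ/2*‖z - zstar‖^2 ≤ 3*(γ*μ/2)*‖z - uhat‖^2 + 3/2*(γ*μ/2)*‖uhat - zstar‖^2 := by
    have e : z - zstar = (z - uhat) + (uhat - zstar) := by abel
    have h := norm_add_sq_real (z - uhat) (uhat - zstar)
    rw [← e] at h
    have hc := real_inner_le_norm (z - uhat) (uhat - zstar)
    have hb : ‖z - zstar‖^2 ≤ 3*‖z - uhat‖^2 + 3/2*‖uhat - zstar‖^2 := by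
      linarith only [h, hc, sq_nonneg (2*‖z - uhat‖ - ‖uhat - zstar‖)]
    have h6 := mul_le_mul_of_nonneg_left hb (by positivity : (0:ℝ) ≤ γ*μ/2)
    linarith only [h6]
  have h18 : γ*μ/2*‖m - zstar‖^2 ≤ 3*(γ*μ/2)*‖m - uhat‖^2 + 3/2*(γ*μ/2)*‖uhat - zstar‖^2 := by
    have e : m - zstar = (m - uhat) + (uhat - zstar) := by abel
    have h := norm_add_sq_real (m - uhat) (uhat - zstar)
    rw [← e] at h
    have hc := real_inner_le_norm (m - uhat) (uhat - zstar)
    have hb : ‖m - zstar‖^2 ≤ 3*‖m - uhat‖^2 + 3/2*‖uhat - zstar‖^2 := by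
      linarith only [h, hc, sq_nonneg (2*‖m - uhat‖ - ‖uhat - zstar‖)]
    have h6 := mul_le_mul_of_nonneg_left hb (by positivity : (0:ℝ) ≤ γ*μ/2)
    linarith only [h6]
  -- assemble: multiply the VI by 2γ
  have hKVI : ‖uhat - zstar‖^2 ≤ ‖S - zstar‖^2 - ‖uhat - S‖^2 - 2*γ*μ*‖uhat - zstar‖^2
      + 2*γ*⟪ht, zstar - uhat⟫ := by
    have h0 := mul_le_mul_of_nonneg_left hVIu (by positivity : (0:ℝ) ≤ 2*γ)
    have hγne : γ ≠ 0 := ne_of_gt hγ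
    have hcan : 2*γ*((1/γ)*⟪uhat - S, zstar - uhat⟫) = 2*⟪uhat - S, zstar - uhat⟫ := by
      field_simp
    have h6' := mul_le_mul_of_nonneg_left hd6 (by positivity : (0:ℝ) ≤ 2*γ)
    linarith only [h0, hcan, h6', hd5]
  -- inner product sign conversion
  have hsign : ⟪hv, uhat - zstar⟫ = -⟪hv, zstar - uhat⟫ := by
    have e : uhat - zstar = -(zstar - uhat) := by abel
    rw [e, inner_neg_right]
  have hcomb : 2*γ*⟪ht, zstar - uhat⟫ + 2*γ*⟪hv, uhat - zstar⟫
      = 2*γ*⟪hv - ht, uhat - zstar⟫ := by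
    have e1 : ⟪hv - ht, uhat - zstar⟫ = ⟪hv, uhat - zstar⟫ - ⟪ht, uhat - zstar⟫ := by
      rw [inner_sub_left]
    have e2 : ⟪ht, zstar - uhat⟫ = -⟪ht, uhat - zstar⟫ := by
      have e : zstar - uhat = -(uhat - zstar) := by abel
      rw [e, inner_neg_right]
    rw [e1, e2]; ring
  -- final assembly
  rw [hzh, hmh] at hd8
  linarith only [hP, hd1, hd2, hKVI, hd7, hd8, h11, h12, h1314, h15, h16, h17, h18, hcomb]
end
end

section
/- Fix an integer n ≥ 1 and reals γ > 0, 0 ≤ τ ≤ 1, 0 ≤ p ≤ 1, μ > 0, δ ≥ 0. Suppose Z, F_1, …, F_n, F satisfy Assumptions 1–3, and let z* ∈ Z be a solution of the VI for F on Z. Fix z, m, u ∈ Z, and let û ∈ Z be a solution of the VI on Z for the operator G(w) = F_1(w) − F_1(m) + F(m) + (1/γ)(w − z − τ(m − z)). For each i ∈ {1, …, n}, set z⁺(i) = proj_Z[u + γ·(F_i(m) − F_1(m) − F_i(u) + F_1(u))]. Then: (1/n)∑_{i=1}^n ‖z⁺(i) − z*‖² + p‖z − z*‖² + (1 − p)‖m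 − z*‖² ≤ (1 − τ + p − γμ/2)‖z − z*‖² + (1 + τ − p − γμ/2)‖m − z*‖² + (2 + 4γδ²/μ + 4/(γμ) + 8γ²δ²)‖u − û‖² − (1 − τ − 3γμ/2)‖z − û‖² − (τ − 3γμ/2 − 8γ²δ²)‖m − û‖². -/
open scoped RealInnerProductSpace

noncomputable section

section AuxTP
variable {E : Type*} [NormedAddCommGroup E] [InnerProductSpace ℝ E]

lemma tp_proj_contract (Z : Set E) (proj : E → E)
    (hproj : ∀ x, ∀ y ∈ Z, ⟪x - proj x, y - proj x⟫ ≤ 0)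
    (zs : E) (hzs : zs ∈ Z) (v : E) :
    ‖proj v - zs‖ ^ 2 ≤ ‖v - zs‖ ^ 2 := by
  have h := hproj v zs hzs
  have e : v - zs = (v - proj v) - (zs - proj v) := by abel
  have e2 : ‖zs - proj v‖ = ‖proj v - zs‖ := norm_sub_rev _ _
  rw [e, norm_sub_sq_real (v - proj v) (zs - proj v), e2]
  nlinarith [sq_nonneg ‖v - proj v‖]

lemma tp_expand3 (a b c : E) : ‖a + b + c‖^2
    = ‖a‖^2 + ‖b‖^2 + ‖c‖^2 + 2*⟪a,b⟫ + 2*⟪a,c⟫ + 2*⟪b,c⟫ := by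
  rw [norm_add_sq_real, norm_add_sq_real, inner_add_left]
  ring

lemma tp_combo_id (t : ℝ) (a b c e : E) :
    2*⟪e - a - t•(b-a), c - e⟫
      = (1-t)*(‖a-c‖^2 - ‖e-a‖^2) + t*(‖b-c‖^2 - ‖e-b‖^2) - ‖e-c‖^2 := by
  have h1 : ∀ x y : E, ‖x - y‖^2 = ‖x‖^2 - 2*⟪x,y⟫ + ‖y‖^2 := fun x y => norm_sub_sq_real x y
  simp only [h1, inner_sub_left, inner_sub_right, real_inner_smul_left, inner_smul_left,
    real_inner_smul_right, conj_trivial, real_inner_self_eq_norm_sq]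
  simp only [real_inner_comm a c, real_inner_comm a e, real_inner_comm b c,
    real_inner_comm b e, real_inner_comm c e, real_inner_comm a b]
  ring

end AuxTP

lemma tp_core_scalar (g h τ A B Q R S T M : ℝ) (hg : 0 < g) (hh : 0 ≤ h)
    (hQ0 : 0 ≤ Q) (hR0 : 0 ≤ R) (hS0 : 0 ≤ S) (hT0 : 0 ≤ T)
    (hA0 : 0 ≤ A) (hB0 : 0 ≤ B) (hM0 : 0 ≤ M)
    (hA : A ≤ Q + R) (hB : B ≤ Q + S) (hM : M ≤ S + T) :
    (1-τ)*(A^2-R^2) + τ*(B^2-S^2) - 2*g*Q^2 + 2*h*T*Q + 2*T*Q + T^2 + 2*h*M*T + 2*h^2*M^2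
      ≤ (1-τ-g/2)*A^2 + (τ-g/2)*B^2 + (2+8*h^2+4*(1+h^2)/g)*T^2
        - (1-τ-3*g/2)*R^2 - (τ-3*g/2-8*h^2)*S^2 := by
  have hgne : g ≠ 0 := ne_of_gt hg
  have hA2 : A^2 ≤ (Q+R)^2 := by nlinarith
  have hB2 : B^2 ≤ (Q+S)^2 := by nlinarith
  have hM2 : M^2 ≤ (S+T)^2 := by nlinarith
  have key : 0 ≤ g * (((1-τ-g/2)*A^2 + (τ-g/2)*B^2 + (2+8*h^2)*T^2
        - (1-τ-3*g/2)*R^2 - (τ-3*g/2-8*h^2)*S^2)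
      - ((1-τ)*(A^2-R^2) + τ*(B^2-S^2) - 2*g*Q^2 + 2*h*T*Q + 2*T*Q + T^2 + 2*h*M*T + 2*h^2*M^2))
      + 4*(1+h^2)*T^2 := by
    nlinarith [mul_nonneg (mul_nonneg hg.le hg.le) (sub_nonneg.2 hA2),
      mul_nonneg (mul_nonneg hg.le hg.le) (sub_nonneg.2 hB2),
      mul_nonneg (mul_nonneg hg.le (mul_nonneg hh hh)) (sub_nonneg.2 hM2),
      mul_nonneg (mul_nonneg (mul_nonneg hg.le hh) hT0) (sub_nonneg.2 hM),
      sq_nonneg (g*(Q-2*R)), sq_nonneg (g*(Q-2*S)),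
      mul_nonneg hg.le (sq_nonneg (6*h*S-(1+2*h)*T)),
      sq_nonneg (g*Q-2*(1+h)*T),
      mul_nonneg hg.le (sq_nonneg ((4*h-2)*T)),
      mul_nonneg hg.le (mul_nonneg (sq_nonneg h) (sq_nonneg T)),
      mul_nonneg hg.le (sq_nonneg T),
      sq_nonneg ((1-h)*T)]
  rw [← sub_nonneg]
  have e : 4*(1+h^2)/g*g = 4*(1+h^2) := div_mul_cancel₀ _ hgne
  set D := ((1-τ-g/2)*A^2 + (τ-g/2)*B^2 + (2+8*h^2+4*(1+h^2)/g)*T^2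
        - (1-τ-3*g/2)*R^2 - (τ-3*g/2-8*h^2)*S^2)
      - ((1-τ)*(A^2-R^2) + τ*(B^2-S^2) - 2*g*Q^2 + 2*h*T*Q + 2*T*Q + T^2 + 2*h*M*T + 2*h^2*M^2) with hD
  have hDg : D * g = g * (((1-τ-g/2)*A^2 + (τ-g/2)*B^2 + (2+8*h^2)*T^2
        - (1-τ-3*g/2)*R^2 - (τ-3*g/2-8*h^2)*S^2)
      - ((1-τ)*(A^2-R^2) + τ*(B^2-S^2) - 2*g*Q^2 + 2*h*T*Q + 2*T*Q + T^2 + 2*h*M*T + 2*h^2*M^2))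
      + 4*(1+h^2)*T^2 := by
    rw [hD]; linear_combination T^2 * e
  have h2 : (0:ℝ) * g ≤ D * g := by rw [hDg]; simpa using key
  exact le_of_mul_le_mul_right h2 hg

set_option maxHeartbeats 1600000 in
/-- one-iteration descent inequality of the Three Pillars Algorithm
with partial participation (Lemma 3 of the paper). Here `û` is the exact solution
of the server subproblem and `z⁺(i)` the update using the operator of device `i`;
the expectation over the uniformly chosen device is the average over `i`. -/
theorem one_iteration_descent_partial_participation
    (n d : ℕ) (hn : 1 ≤ n)
    (γ τ p μ δ L : ℝ)
    (hγ : 0 < γ) (hτ0 : 0 ≤ τ) (hτ1 : τ ≤ 1) (hp0 : 0 ≤ p) (hp1 : p ≤ 1)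
    (hμ : 0 < μ) (hδ : 0 ≤ δ)
    (Z : Set (EuclideanSpace ℝ (Fin d)))
    (hZne : Z.Nonempty) (hZcl : IsClosed Z) (hZcv : Convex ℝ Z)
    (proj : EuclideanSpace ℝ (Fin d) → EuclideanSpace ℝ (Fin d))
    (hprojmem : ∀ x, proj x ∈ Z)
    (hproj : ∀ x, ∀ y ∈ Z, ⟪x - proj x, y - proj x⟫ ≤ 0)
    (Fi : Fin n → EuclideanSpace ℝ (Fin d) → EuclideanSpace ℝ (Fin d))
    (F : EuclideanSpace ℝ (Fin d) → EuclideanSpace ℝ (Fin d))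
    (hF : ∀ w, F w = (n : ℝ)⁻¹ • ∑ i, Fi i w)
    (F1 : EuclideanSpace ℝ (Fin d) → EuclideanSpace ℝ (Fin d))
    (hF1 : F1 = Fi ⟨0, hn⟩)
    (hLip : ∀ i, ∀ u ∈ Z, ∀ v ∈ Z, ‖Fi i u - Fi i v‖ ≤ L * ‖u - v‖)
    (hmono : ∀ i, ∀ u ∈ Z, ∀ v ∈ Z, 0 ≤ ⟪Fi i u - Fi i v, u - v⟫)
    (hstrong : ∀ u ∈ Z, ∀ v ∈ Z, μ * ‖u - v‖ ^ 2 ≤ ⟪F u - F v, u - v⟫)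
    (hrel : ∀ i, ∀ u ∈ Z, ∀ v ∈ Z,
      ‖(Fi i u - F u) - (Fi i v - F v)‖ ≤ δ * ‖u - v‖)
    (zstar : EuclideanSpace ℝ (Fin d)) (hzstar : zstar ∈ Z)
    (hVI : ∀ w ∈ Z, 0 ≤ ⟪F zstar, w - zstar⟫)
    (z m u : EuclideanSpace ℝ (Fin d)) (hz : z ∈ Z) (hm : m ∈ Z) (hu : u ∈ Z)
    (G : EuclideanSpace ℝ (Fin d) → EuclideanSpace ℝ (Fin d))
    (hG : ∀ w, G w = F1 w - F1 m + F m + (1 / γ) • (w - z - τ • (m - z)))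
    (uhat : EuclideanSpace ℝ (Fin d)) (huhat : uhat ∈ Z)
    (hVIhat : ∀ w ∈ Z, 0 ≤ ⟪G uhat, w - uhat⟫)
    (zplus : Fin n → EuclideanSpace ℝ (Fin d))
    (hzplus : ∀ i, zplus i = proj (u + γ • (Fi i m - F1 m - Fi i u + F1 u))) :
    (n : ℝ)⁻¹ * ∑ i, ‖zplus i - zstar‖ ^ 2
        + p * ‖z - zstar‖ ^ 2 + (1 - p) * ‖m - zstar‖ ^ 2
      ≤ (1 - τ + p - γ * μ / 2) * ‖z - zstar‖ ^ 2
        + (1 + τ - p - γ * μ / 2) * ‖m - zstar‖ ^ 2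
        + (2 + 4 * γ * δ ^ 2 / μ + 4 / (γ * μ) + 8 * γ ^ 2 * δ ^ 2) * ‖u - uhat‖ ^ 2
        - (1 - τ - 3 * γ * μ / 2) * ‖z - uhat‖ ^ 2
        - (τ - 3 * γ * μ / 2 - 8 * γ ^ 2 * δ ^ 2) * ‖m - uhat‖ ^ 2 := by
  have hn0 : (0:ℝ) < n := by exact_mod_cast hn
  set i0 : Fin n := ⟨0, hn⟩ with hi0
  set x : Fin n → EuclideanSpace ℝ (Fin d) :=
    fun i => (Fi i m - F m) - (Fi i u - F u) with hx
  -- sum of deviations is zero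
  have hsum0 : ∀ w, ∑ i, (Fi i w - F w) = 0 := by
    intro w
    rw [Finset.sum_sub_distrib, Finset.sum_const, Finset.card_univ, Fintype.card_fin, hF w,
      ← Nat.cast_smul_eq_nsmul ℝ, smul_smul, mul_inv_cancel₀ (ne_of_gt hn0), one_smul, sub_self]
  have hxsum : ∑ i, x i = 0 := by
    simp only [hx]
    rw [Finset.sum_sub_distrib, hsum0 m, hsum0 u, sub_self]
  set w0 : EuclideanSpace ℝ (Fin d) := (u - zstar) - γ • x i0 with hw0
  -- per-device projection bound
  have hzp : ∀ i, ‖zplus i - zstar‖^2 ≤ ‖w0 + γ • x i‖^2 := by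
    intro i
    have hv : (u + γ • (Fi i m - F1 m - Fi i u + F1 u)) - zstar = w0 + γ • x i := by
      simp only [hw0, hx, hF1, hi0]
      module
    rw [hzplus i]
    calc ‖proj (u + γ • (Fi i m - F1 m - Fi i u + F1 u)) - zstar‖^2
        ≤ ‖(u + γ • (Fi i m - F1 m - Fi i u + F1 u)) - zstar‖^2 :=
          tp_proj_contract Z proj hproj zstar hzstar _
      _ = ‖w0 + γ • x i‖^2 := by rw [hv]
  have hxb : ∀ i, ‖x i‖ ≤ δ * ‖m - u‖ := fun i => hrel i m hm u hu
  -- sum expansion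
  have hexp : ∀ i, ‖w0 + γ • x i‖^2 = ‖w0‖^2 + 2*γ*⟪w0, x i⟫ + γ^2*‖x i‖^2 := by
    intro i
    rw [norm_add_sq_real, real_inner_smul_right, norm_smul, mul_pow, Real.norm_eq_abs, sq_abs]
    ring
  have hsum2 : ∑ i, ‖w0 + γ • x i‖^2 = (n:ℝ)*‖w0‖^2 + γ^2 * ∑ i, ‖x i‖^2 := by
    simp only [hexp]
    rw [Finset.sum_add_distrib, Finset.sum_add_distrib, Finset.sum_const, Finset.card_univ,
      Fintype.card_fin, ← Finset.mul_sum, ← Finset.mul_sum, ← inner_sum, hxsum,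
      inner_zero_right, mul_zero, add_zero, nsmul_eq_mul]
  have hsum3 : ∑ i, ‖x i‖^2 ≤ (n:ℝ) * (δ*‖m-u‖)^2 := by
    calc ∑ i, ‖x i‖^2 ≤ ∑ _i : Fin n, (δ*‖m-u‖)^2 :=
          Finset.sum_le_sum (fun i _ => pow_le_pow_left₀ (norm_nonneg _) (hxb i) 2)
      _ = (n:ℝ) * (δ*‖m-u‖)^2 := by
          rw [Finset.sum_const, Finset.card_univ, Fintype.card_fin, nsmul_eq_mul]
  have havg : (n:ℝ)⁻¹ * ∑ i, ‖zplus i - zstar‖^2 ≤ ‖w0‖^2 + γ^2*(δ*‖m-u‖)^2 := by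
    have h1 : ∑ i, ‖zplus i - zstar‖^2 ≤ (n:ℝ) * (‖w0‖^2 + γ^2*(δ*‖m-u‖)^2) := by
      have h2 := Finset.sum_le_sum (fun i (_ : i ∈ Finset.univ) => hzp i)
      have h3 := mul_le_mul_of_nonneg_left hsum3 (sq_nonneg γ)
      nlinarith [h2, hsum2, h3]
    have h4 := mul_le_mul_of_nonneg_left h1 (inv_nonneg.2 hn0.le)
    rwa [← mul_assoc, inv_mul_cancel₀ (ne_of_gt hn0), one_mul] at h4
  -- expansion of ‖w0‖²
  have hw0sq : ‖w0‖^2 = ‖uhat - zstar‖^2 + ‖u - uhat‖^2 + γ^2*‖x i0‖^2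
      + 2*⟪u - uhat, uhat - zstar⟫ + 2*γ*⟪x i0, zstar - uhat⟫ + 2*γ*⟪uhat - u, x i0⟫ := by
    have e : w0 = (uhat - zstar) + (u - uhat) + (-γ) • x i0 := by
      simp only [hw0]; module
    rw [e, tp_expand3]
    rw [norm_smul, real_inner_smul_right, real_inner_smul_right, mul_pow, Real.norm_eq_abs, sq_abs]
    simp only [inner_sub_left, inner_sub_right]
    simp only [real_inner_comm zstar uhat, real_inner_comm (x i0) uhat,
      real_inner_comm (x i0) zstar, real_inner_comm (x i0) u, real_inner_comm zstar u,
      real_inner_comm uhat u]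
    ring
  -- the VI / strong monotonicity inequality
  set Evec : EuclideanSpace ℝ (Fin d) := (F1 uhat - F uhat) - (F1 m - F m) with hEvec
  have hsplit : F1 uhat - F1 m + F m = F uhat + Evec := by rw [hEvec]; abel
  have hvi := hVIhat zstar hzstar
  rw [hG uhat, inner_add_left, real_inner_smul_left] at hvi
  have hcombo := tp_combo_id τ z m zstar uhat
  have hXeq : γ * ⟪F1 uhat - F1 m + F m, zstar - uhat⟫
      = -(γ*⟪F uhat - F zstar, uhat - zstar⟫) - γ*⟪F zstar, uhat - zstar⟫
        + γ*⟪Evec, zstar - uhat⟫ := by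
    rw [hsplit]
    simp only [inner_add_left, inner_sub_left, inner_sub_right]
    ring
  have hmul : 0 ≤ γ*⟪F1 uhat - F1 m + F m, zstar - uhat⟫
      + ⟪uhat - z - τ•(m-z), zstar - uhat⟫ := by
    have h5 := mul_le_mul_of_nonneg_left hvi hγ.le
    rw [mul_zero, mul_add, ← mul_assoc] at h5
    rw [mul_one_div, div_self (ne_of_gt hγ), one_mul] at h5
    linarith
  have hstrongQ := hstrong uhat huhat zstar hzstar
  have hvi0 := hVI uhat huhat
  have hI1 : ‖uhat - zstar‖^2 + 2*γ*μ*‖uhat - zstar‖^2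
      ≤ (1-τ)*(‖z - zstar‖^2 - ‖uhat - z‖^2) + τ*(‖m - zstar‖^2 - ‖uhat - m‖^2)
        + 2*γ*⟪Evec, zstar - uhat⟫ := by
    linarith [hmul, hXeq, hcombo, mul_le_mul_of_nonneg_left hstrongQ hγ.le,
      mul_nonneg hγ.le hvi0]
  -- Cauchy-Schwarz bounds
  have hyb : ‖Evec + x i0‖ ≤ δ * ‖u - uhat‖ := by
    have h := hrel i0 uhat huhat u hu
    have e : Evec + x i0 = (Fi i0 uhat - F uhat) - (Fi i0 u - F u) := by
      simp only [hEvec, hx, hF1, hi0]; abel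
    rw [e]
    calc ‖(Fi i0 uhat - F uhat) - (Fi i0 u - F u)‖ ≤ δ * ‖uhat - u‖ := h
      _ = δ * ‖u - uhat‖ := by rw [norm_sub_rev]
  have hcs1 : ⟪Evec + x i0, zstar - uhat⟫ ≤ (δ*‖u - uhat‖) * ‖uhat - zstar‖ := by
    calc ⟪Evec + x i0, zstar - uhat⟫ ≤ ‖Evec + x i0‖ * ‖zstar - uhat‖ :=
          real_inner_le_norm _ _
      _ = ‖Evec + x i0‖ * ‖uhat - zstar‖ := by rw [norm_sub_rev]
      _ ≤ (δ*‖u - uhat‖) * ‖uhat - zstar‖ :=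
          mul_le_mul_of_nonneg_right hyb (norm_nonneg _)
  have hcs2 : ⟪u - uhat, uhat - zstar⟫ ≤ ‖u - uhat‖ * ‖uhat - zstar‖ :=
    real_inner_le_norm _ _
  have hcs3 : ⟪uhat - u, x i0⟫ ≤ ‖u - uhat‖ * (δ*‖m - u‖) := by
    calc ⟪uhat - u, x i0⟫ ≤ ‖uhat - u‖ * ‖x i0‖ := real_inner_le_norm _ _
      _ = ‖u - uhat‖ * ‖x i0‖ := by rw [norm_sub_rev]
      _ ≤ ‖u - uhat‖ * (δ*‖m - u‖) :=
          mul_le_mul_of_nonneg_left (hxb i0) (norm_nonneg _)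
  have hx0sq : ‖x i0‖^2 ≤ (δ*‖m - u‖)^2 := pow_le_pow_left₀ (norm_nonneg _) (hxb i0) 2
  have hadd : ⟪Evec, zstar - uhat⟫ + ⟪x i0, zstar - uhat⟫ = ⟪Evec + x i0, zstar - uhat⟫ :=
    (inner_add_left _ _ _).symm
  -- master inequality
  have hmaster : (n:ℝ)⁻¹ * ∑ i, ‖zplus i - zstar‖^2
      ≤ (1-τ)*(‖z - zstar‖^2 - ‖z - uhat‖^2) + τ*(‖m - zstar‖^2 - ‖m - uhat‖^2)
        - 2*(γ*μ)*‖uhat - zstar‖^2 + 2*(γ*δ)*‖u - uhat‖*‖uhat - zstar‖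
        + 2*‖u - uhat‖*‖uhat - zstar‖ + ‖u - uhat‖^2
        + 2*(γ*δ)*‖m - u‖*‖u - uhat‖ + 2*(γ*δ)^2*‖m - u‖^2 := by
    have er1 : ‖uhat - z‖^2 = ‖z - uhat‖^2 := by rw [norm_sub_rev]
    have er2 : ‖uhat - m‖^2 = ‖m - uhat‖^2 := by rw [norm_sub_rev]
    rw [er1, er2] at hI1
    have hadd2 : 2*γ*⟪Evec, zstar - uhat⟫ + 2*γ*⟪x i0, zstar - uhat⟫
        = 2*γ*⟪Evec + x i0, zstar - uhat⟫ := by rw [inner_add_left]; ring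
    have hb1 : 2*γ*⟪Evec + x i0, zstar - uhat⟫ ≤ 2*γ*((δ*‖u - uhat‖) * ‖uhat - zstar‖) :=
      mul_le_mul_of_nonneg_left hcs1 (by linarith : (0:ℝ) ≤ 2*γ)
    have hb3 : 2*γ*⟪uhat - u, x i0⟫ ≤ 2*γ*(‖u - uhat‖ * (δ*‖m - u‖)) :=
      mul_le_mul_of_nonneg_left hcs3 (by linarith : (0:ℝ) ≤ 2*γ)
    have hb4 : γ^2*‖x i0‖^2 ≤ γ^2*(δ*‖m - u‖)^2 :=
      mul_le_mul_of_nonneg_left hx0sq (sq_nonneg γ)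
    linarith [havg, hw0sq, hI1, hadd2, hb1, hb3, hb4, hcs2]
  -- scalar core
  have hAtri : ‖z - zstar‖ ≤ ‖uhat - zstar‖ + ‖z - uhat‖ := by
    have e : z - zstar = (z - uhat) + (uhat - zstar) := by abel
    rw [e]
    exact (norm_add_le _ _).trans (by rw [add_comm])
  have hBtri : ‖m - zstar‖ ≤ ‖uhat - zstar‖ + ‖m - uhat‖ := by
    have e : m - zstar = (m - uhat) + (uhat - zstar) := by abel
    rw [e]
    exact (norm_add_le _ _).trans (by rw [add_comm])
  have hMtri : ‖m - u‖ ≤ ‖m - uhat‖ + ‖u - uhat‖ := by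
    have e : m - u = (m - uhat) - (u - uhat) := by abel
    rw [e]
    exact norm_sub_le _ _
  have hcore := tp_core_scalar (γ*μ) (γ*δ) τ ‖z - zstar‖ ‖m - zstar‖ ‖uhat - zstar‖
    ‖z - uhat‖ ‖m - uhat‖ ‖u - uhat‖ ‖m - u‖ (mul_pos hγ hμ) (mul_nonneg hγ.le hδ)
    (norm_nonneg _) (norm_nonneg _) (norm_nonneg _) (norm_nonneg _) (norm_nonneg _)
    (norm_nonneg _) (norm_nonneg _) hAtri hBtri hMtri
  have hcoef : (2+8*(γ*δ)^2+4*(1+(γ*δ)^2)/(γ*μ)) * ‖u - uhat‖^2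
      = (2 + 4 * γ * δ ^ 2 / μ + 4 / (γ * μ) + 8 * γ ^ 2 * δ ^ 2) * ‖u - uhat‖^2 := by
    have : (2+8*(γ*δ)^2+4*(1+(γ*δ)^2)/(γ*μ))
        = 2 + 4 * γ * δ ^ 2 / μ + 4 / (γ * μ) + 8 * γ ^ 2 * δ ^ 2 := by
      field_simp
      ring
    rw [this]
  have hchain : (n : ℝ)⁻¹ * ∑ i, ‖zplus i - zstar‖ ^ 2
      ≤ (1-τ-(γ*μ)/2)*‖z - zstar‖^2 + (τ-(γ*μ)/2)*‖m - zstar‖^2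
        + (2 + 4 * γ * δ ^ 2 / μ + 4 / (γ * μ) + 8 * γ ^ 2 * δ ^ 2)*‖u - uhat‖^2
        - (1-τ-3*(γ*μ)/2)*‖z - uhat‖^2 - (τ-3*(γ*μ)/2-8*(γ*δ)^2)*‖m - uhat‖^2 := by
    have h6 : (1-τ-(γ*μ)/2)*‖z - zstar‖^2 + (τ-(γ*μ)/2)*‖m - zstar‖^2
        + (2+8*(γ*δ)^2+4*(1+(γ*δ)^2)/(γ*μ))*‖u - uhat‖^2
        - (1-τ-3*(γ*μ)/2)*‖z - uhat‖^2 - (τ-3*(γ*μ)/2-8*(γ*δ)^2)*‖m - uhat‖^2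
      = (1-τ-(γ*μ)/2)*‖z - zstar‖^2 + (τ-(γ*μ)/2)*‖m - zstar‖^2
        + (2 + 4 * γ * δ ^ 2 / μ + 4 / (γ * μ) + 8 * γ ^ 2 * δ ^ 2)*‖u - uhat‖^2
        - (1-τ-3*(γ*μ)/2)*‖z - uhat‖^2 - (τ-3*(γ*μ)/2-8*(γ*δ)^2)*‖m - uhat‖^2 := by
      rw [hcoef]
    exact (hmaster.trans hcore).trans_eq h6
  linarith only [hchain]
end
end

section
/- Fix an integer n ≥ 1 and reals L, μ, δ, p with 0 < μ ≤ L, 0 < δ ≤ 2L, 0 < p ≤ 1/4. Suppose Z, F_1, …, F_n, F satisfy Assumptions 1–3, and let z* ∈ Z be a solution of the VI for F on Z. Set τ = p and γ = min{ p/(3μ), √p/(4δ), c } where c is any real with c ≥ 1/L. Fix z, m ∈ Z, let û ∈ Z be a solution of the VI on Z for the operator G(w) = F_1(w) − F_1(m) + F(m) + (1/γ)(w − z − τ(m − z)), and let u ∈ Z be any point satisfying ‖u − û‖² ≤ (μp/(40L))·‖z − û‖². For each i ∈ {1, …, n}, set z⁺(i) = proj_Z[u + γ·(F_i(m) − F_1(m)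 − F_i(u) + F_1(u))]. Then: (1/n)∑_{i=1}^n ‖z⁺(i) − z*‖² + p‖z − z*‖² + (1 − p)‖m − z*‖² ≤ (1 − γμ/2)·(‖z − z*‖² + ‖m − z*‖²). -/
open scoped RealInnerProductSpace

noncomputable section


set_option maxHeartbeats 1000000 in
lemma scalar_key (p g1 g2 t w a E : ℝ)
    (hp : 0 < p) (hp4 : p ≤ 1/4) (hg1pos : 0 < g1) (hg1 : g1 ≤ p/3)
    (hg2 : 0 ≤ g2) (hg2sq : g2^2 ≤ p/16)
    (ht : 0 ≤ t) (hw : 0 ≤ w) (ha : 0 ≤ a) (hE : 0 ≤ E)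
    (hE1 : E^2 ≤ (p/40)*t^2) (hE2 : 10*E^2 ≤ g1*t^2) :
    g1/2*((t+a)^2+(w+a)^2) + 2*E*a + E^2 + 2*g2*(w+a+E)*E + 4*g2^2*(w+E)^2
      ≤ (1-p)*t^2 + p*w^2 + 2*g1*a^2 := by
  set x := g2*E with hx
  have hx0 : 0 ≤ x := mul_nonneg hg2 hE
  have hxsq : x^2 ≤ p*g1*t^2/160 := by
    have h : g2^2 * E^2 ≤ (p/16) * (g1*t^2/10) :=
      mul_le_mul hg2sq (by linarith) (by positivity) (by positivity)
    calc x^2 = g2^2*E^2 := by ring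
    _ ≤ (p/16)*(g1*t^2/10) := h
    _ = p*g1*t^2/160 := by ring
  have hxsq2 : x^2 ≤ p^2*t^2/640 := by
    have h : g2^2 * E^2 ≤ (p/16) * ((p/40)*t^2) :=
      mul_le_mul hg2sq hE1 (by positivity) (by positivity)
    calc x^2 = g2^2*E^2 := by ring
    _ ≤ (p/16)*((p/40)*t^2) := h
    _ = p^2*t^2/640 := by ring
  have hg2le : g2 ≤ 1/8 := by nlinarith
  have hEt : 12*E ≤ t := by nlinarith [sq_nonneg (12*E - t)]
  have b1 : g1*t*a ≤ (4*g1/3)*t^2 + (3*g1/16)*a^2 := by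
    nlinarith [mul_nonneg hg1pos.le (sq_nonneg (8*t - 3*a))]
  have b2 : g1*w*a ≤ (4*g1/3)*w^2 + (3*g1/16)*a^2 := by
    nlinarith [mul_nonneg hg1pos.le (sq_nonneg (8*w - 3*a))]
  have b3 : 2*E*a ≤ g1/2*a^2 + t^2/5 := by
    have h0 : 0 ≤ g1*(g1/2*a^2 + t^2/5 - 2*E*a) := by
      nlinarith [sq_nonneg (E - g1*a/2)]
    have h1 : 0 ≤ g1/2*a^2 + t^2/5 - 2*E*a :=
      nonneg_of_mul_nonneg_right h0 hg1pos
    linarith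
  have b4 : 2*x*a ≤ g1/8*a^2 + p/20*t^2 := by
    have h0 : 0 ≤ g1*(g1/8*a^2 + p/20*t^2 - 2*x*a) := by
      nlinarith [sq_nonneg (g1*a - 8*x)]
    have h1 : 0 ≤ g1/8*a^2 + p/20*t^2 - 2*x*a :=
      nonneg_of_mul_nonneg_right h0 hg1pos
    linarith
  have b6 : 2*x*w ≤ p/20*w^2 + p/32*t^2 := by
    have h0 : 0 ≤ p*(p/20*w^2 + p/32*t^2 - 2*x*w) := by
      nlinarith [sq_nonneg (p*w - 20*x)]
    have h1 : 0 ≤ p/20*w^2 + p/32*t^2 - 2*x*w :=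
      nonneg_of_mul_nonneg_right h0 hp
    linarith
  have b7 : 2*g2*E^2 ≤ p/160*t^2 := by nlinarith
  have e1 : 4*g2^2*w^2 ≤ p/4*w^2 := by nlinarith [sq_nonneg w]
  have e2 : 8*g2^2*(w*E) ≤ p/48*(w^2+t^2) := by
    have hwE : 0 ≤ w*E := mul_nonneg hw hE
    have h1 : 8*g2^2*(w*E) ≤ 8*(p/16)*(w*E) := by nlinarith
    have h2 : w*(12*E) ≤ w*t := mul_le_mul_of_nonneg_left hEt hw
    nlinarith [sq_nonneg (w - t)]
  have e3 : 4*g2^2*E^2 ≤ p/640*t^2 := by nlinarith [sq_nonneg E]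
  have hg1t : g1*t^2 ≤ p/3*t^2 := by nlinarith [sq_nonneg t]
  have hg1w : g1*w^2 ≤ p/3*w^2 := by nlinarith [sq_nonneg w]
  have hpt : p*t^2 ≤ 1/4*t^2 := by nlinarith [sq_nonneg t]
  have expand : g1/2*((t+a)^2+(w+a)^2) + 2*E*a + E^2 + 2*g2*(w+a+E)*E + 4*g2^2*(w+E)^2
      = g1/2*t^2 + g1*t*a + g1/2*w^2 + g1*w*a + g1*a^2 + 2*E*a + E^2
        + 2*x*w + 2*x*a + 2*g2*E^2 + 4*g2^2*w^2 + 8*g2^2*(w*E) + 4*g2^2*E^2 := by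
    rw [hx]; ring
  have hpw : 0 ≤ p*w^2 := by positivity
  have hpt0 : 0 ≤ p*t^2 := by positivity
  have hg1t0 : 0 ≤ g1*t^2 := by positivity
  have hg1w0 : 0 ≤ g1*w^2 := by positivity
  have ht0 : 0 ≤ t^2 := by positivity
  rw [expand]
  linarith [b1, b2, b3, b4, b6, b7, e1, e2, e3, hg1t, hg1w, hpt, hE1]

open scoped RealInnerProductSpace

section helpers
variable {V : Type*} [NormedAddCommGroup V] [InnerProductSpace ℝ V]

lemma convex_norm_id (x y : V) (p : ℝ) :
    ‖x + p • (y - x)‖^2 = (1-p)*‖x‖^2 + p*‖y‖^2 - p*(1-p)*‖x-y‖^2 := by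
  rw [norm_add_sq_real, real_inner_smul_right, norm_smul, mul_pow, inner_sub_right,
    norm_sub_sq_real (x := y) (y := x), norm_sub_sq_real (x := x) (y := y),
    real_inner_self_eq_norm_sq, real_inner_comm y x]
  rw [Real.norm_eq_abs, sq_abs]
  ring

lemma two_point_id (c vec : V) (p : ℝ) :
    (1-p)*‖c - p • vec‖^2 + p*‖c + (1-p) • vec‖^2 = ‖c‖^2 + p*(1-p)*‖vec‖^2 := by
  rw [norm_sub_sq_real, norm_add_sq_real, real_inner_smul_right, real_inner_smul_right,
    norm_smul, norm_smul, mul_pow, mul_pow, Real.norm_eq_abs, Real.norm_eq_abs, sq_abs, sq_abs]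
  ring

lemma proj_sq_le (projx x y : V) (h : ⟪x - projx, y - projx⟫ ≤ 0) :
    ‖projx - y‖^2 ≤ ‖x - y‖^2 := by
  have he : x - y = (x - projx) + (projx - y) := by abel
  have h2 : ⟪x - projx, projx - y⟫ = -⟪x - projx, y - projx⟫ := by
    rw [← inner_neg_right]; congr 1; abel
  rw [he, norm_add_sq_real, h2]
  nlinarith [sq_nonneg (‖x - projx‖)]

lemma expand_inner_vu (A B q1 q2 : V) :
    ⟪A + B, q1 + q2⟫ = ⟪A, q1⟫ + ⟪A, q2⟫ + ⟪B, q1 + q2⟫ := by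
  rw [inner_add_left, inner_add_right]

end helpers


set_option maxHeartbeats 1000000 in
/-- one-iteration contraction of the Three Pillars Algorithm with
partial participation, for the tuned parameters `τ = p`,
`γ = min{p/(3μ), √p/(4δ), c}` with `c ≥ 1/L`, and an inexact solution `u` of the
server subproblem with accuracy `‖u − û‖² ≤ (μp/(40L))‖z − û‖²`. -/
theorem one_iteration_contraction
    (n d : ℕ) (hn : 1 ≤ n)
    (L μ δ p : ℝ) (hμ : 0 < μ) (hμL : μ ≤ L) (hδ : 0 < δ) (hδL : δ ≤ 2 * L)
    (hp : 0 < p) (hp4 : p ≤ 1 / 4)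
    (Z : Set (EuclideanSpace ℝ (Fin d)))
    (hZne : Z.Nonempty) (hZcl : IsClosed Z) (hZcv : Convex ℝ Z)
    (proj : EuclideanSpace ℝ (Fin d) → EuclideanSpace ℝ (Fin d))
    (hprojmem : ∀ x, proj x ∈ Z)
    (hproj : ∀ x, ∀ y ∈ Z, ⟪x - proj x, y - proj x⟫ ≤ 0)
    (Fi : Fin n → EuclideanSpace ℝ (Fin d) → EuclideanSpace ℝ (Fin d))
    (F : EuclideanSpace ℝ (Fin d) → EuclideanSpace ℝ (Fin d))
    (hF : ∀ w, F w = (n : ℝ)⁻¹ • ∑ i, Fi i w)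
    (F1 : EuclideanSpace ℝ (Fin d) → EuclideanSpace ℝ (Fin d))
    (hF1 : F1 = Fi ⟨0, hn⟩)
    (hLip : ∀ i, ∀ u ∈ Z, ∀ v ∈ Z, ‖Fi i u - Fi i v‖ ≤ L * ‖u - v‖)
    (hmono : ∀ i, ∀ u ∈ Z, ∀ v ∈ Z, 0 ≤ ⟪Fi i u - Fi i v, u - v⟫)
    (hstrong : ∀ u ∈ Z, ∀ v ∈ Z, μ * ‖u - v‖ ^ 2 ≤ ⟪F u - F v, u - v⟫)
    (hrel : ∀ i, ∀ u ∈ Z, ∀ v ∈ Z,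
      ‖(Fi i u - F u) - (Fi i v - F v)‖ ≤ δ * ‖u - v‖)
    (zstar : EuclideanSpace ℝ (Fin d)) (hzstar : zstar ∈ Z)
    (hVI : ∀ w ∈ Z, 0 ≤ ⟪F zstar, w - zstar⟫)
    (τ γ c : ℝ) (hτ : τ = p) (hc : 1 / L ≤ c)
    (hγ : γ = min (min (p / (3 * μ)) (Real.sqrt p / (4 * δ))) c)
    (z m : EuclideanSpace ℝ (Fin d)) (hz : z ∈ Z) (hm : m ∈ Z)
    (G : EuclideanSpace ℝ (Fin d) → EuclideanSpace ℝ (Fin d))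
    (hG : ∀ w, G w = F1 w - F1 m + F m + (1 / γ) • (w - z - τ • (m - z)))
    (uhat : EuclideanSpace ℝ (Fin d)) (huhat : uhat ∈ Z)
    (hVIhat : ∀ w ∈ Z, 0 ≤ ⟪G uhat, w - uhat⟫)
    (u : EuclideanSpace ℝ (Fin d)) (hu : u ∈ Z)
    (huacc : ‖u - uhat‖ ^ 2 ≤ (μ * p / (40 * L)) * ‖z - uhat‖ ^ 2)
    (zplus : Fin n → EuclideanSpace ℝ (Fin d))
    (hzplus : ∀ i, zplus i = proj (u + γ • (Fi i m - F1 m - Fi i u + F1 u))) :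
    (n : ℝ)⁻¹ * ∑ i, ‖zplus i - zstar‖ ^ 2
        + p * ‖z - zstar‖ ^ 2 + (1 - p) * ‖m - zstar‖ ^ 2
      ≤ (1 - γ * μ / 2) * (‖z - zstar‖ ^ 2 + ‖m - zstar‖ ^ 2) := by
  
  have hL : 0 < L := lt_of_lt_of_le hμ hμL
  have hsq : Real.sqrt p ^ 2 = p := Real.sq_sqrt hp.le
  have hsple : Real.sqrt p ≤ 1/2 := by
    have h1 : Real.sqrt p ≤ Real.sqrt (1/4) := Real.sqrt_le_sqrt hp4
    rwa [show (1/4:ℝ) = (1/2)^2 by norm_num, Real.sqrt_sq (by norm_num)] at h1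
  have hspos : 0 < Real.sqrt p := Real.sqrt_pos.mpr hp
  have hγpos : 0 < γ := by
    rw [hγ]
    exact lt_min (lt_min (by positivity) (div_pos hspos (by positivity)))
      (lt_of_lt_of_le (by positivity) hc)
  have hγ1 : γ ≤ p / (3*μ) := hγ ▸ le_trans (min_le_left _ _) (min_le_left _ _)
  have hγ2 : γ ≤ Real.sqrt p / (4*δ) := hγ ▸ le_trans (min_le_left _ _) (min_le_right _ _)
  have hγμ : γ * μ ≤ p / 3 := by
    have h := mul_le_mul_of_nonneg_right hγ1 hμ.le
    have he : p / (3*μ) * μ = p/3 := by field_simp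
    linarith [he ▸ h]
  have hγδ : γ * δ ≤ Real.sqrt p / 4 := by
    have h := mul_le_mul_of_nonneg_right hγ2 hδ.le
    have he : Real.sqrt p / (4*δ) * δ = Real.sqrt p / 4 := by field_simp
    linarith [he ▸ h]
  have hg1pos : 0 < γ * μ := mul_pos hγpos hμ
  have hg2nn : 0 ≤ γ * δ := le_of_lt (mul_pos hγpos hδ)
  have hg2sq : (γ*δ)^2 ≤ p/16 := by nlinarith [hγδ, hsq, Real.sqrt_nonneg p]
  have hγlow : p/(4*L) ≤ γ := by
    have h1 : p/(4*L) ≤ p/(3*μ) := by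
      rw [div_le_div_iff₀ (by positivity) (by positivity)]; nlinarith
    have hsd : Real.sqrt p * δ ≤ L := by nlinarith [mul_le_mul_of_nonneg_right hsple hδ.le]
    have h2 : p/(4*L) ≤ Real.sqrt p/(4*δ) := by
      rw [div_le_div_iff₀ (by positivity) (by positivity)]
      nlinarith [mul_le_mul_of_nonneg_left hsd (Real.sqrt_nonneg p)]
    have h3 : p/(4*L) ≤ c := by
      refine le_trans ?_ hc
      rw [div_le_div_iff₀ (by positivity) hL]; nlinarith
    rw [hγ]; exact le_min (le_min h1 h2) h3
  -- scalar abbreviations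
  set v : EuclideanSpace ℝ (Fin d) := z + p • (m - z) with hveq
  set a := ‖uhat - zstar‖ with ha'
  set t := ‖z - uhat‖ with ht'
  set w := ‖m - uhat‖ with hw'
  set bb := ‖v - uhat‖ with hbb'
  set E := ‖u - uhat‖ with hE'
  set Zr := ‖z - zstar‖ with hZr'
  set Mr := ‖m - zstar‖ with hMr'
  set Vz := ‖v - zstar‖ with hVz'
  set Nr := ‖u - zstar‖ with hNr'
  set Mu := ‖m - u‖ with hMu'
  clear_value v a t w bb E Zr Mr Vz Nr Mu
  have ha0 : 0 ≤ a := by rw [ha']; positivity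
  have ht0 : 0 ≤ t := by rw [ht']; positivity
  have hw0 : 0 ≤ w := by rw [hw']; positivity
  have hE0 : 0 ≤ E := by rw [hE']; positivity
  have hZr0 : 0 ≤ Zr := by rw [hZr']; positivity
  have hMr0 : 0 ≤ Mr := by rw [hMr']; positivity
  have hNr0 : 0 ≤ Nr := by rw [hNr']; positivity
  have hMu0 : 0 ≤ Mu := by rw [hMu']; positivity
  -- Step A : subproblem VI
  have hA : a^2 ≤ Vz^2 - bb^2 + 2*(γ*⟪F1 uhat - F1 m + F m, zstar - uhat⟫) := by
    have h0 := hVIhat zstar hzstar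
    rw [hG uhat] at h0
    have hweq : uhat - z - τ • (m - z) = uhat - v := by rw [hτ, hveq, sub_sub]
    rw [hweq, inner_add_left, real_inner_smul_left] at h0
    have h1 : 0 ≤ γ*⟪F1 uhat - F1 m + F m, zstar - uhat⟫ + ⟪uhat - v, zstar - uhat⟫ := by
      have h2 := mul_nonneg hγpos.le h0
      have h3 : γ * (⟪F1 uhat - F1 m + F m, zstar - uhat⟫ + 1/γ * ⟪uhat - v, zstar - uhat⟫)
          = γ*⟪F1 uhat - F1 m + F m, zstar - uhat⟫ + ⟪uhat - v, zstar - uhat⟫ := by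
        field_simp
      linarith [h3 ▸ h2]
    have hinner : ⟪uhat - v, zstar - uhat⟫ = (Vz^2 - bb^2 - a^2)/2 := by
      have hexp := norm_add_sq_real (v - uhat) (uhat - zstar)
      rw [show (v - uhat) + (uhat - zstar) = v - zstar by abel] at hexp
      have h4 : ⟪uhat - v, zstar - uhat⟫ = ⟪v - uhat, uhat - zstar⟫ := by
        rw [← inner_neg_neg]; congr 1 <;> abel
      rw [h4]; rw [← hVz', ← hbb', ← ha'] at hexp; linarith
    linarith
  -- Step B : strong monotonicity + VI at zstar
  have hB : γ*⟪F1 uhat - F1 m + F m, zstar - uhat⟫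
      + γ*⟪F m - F1 m - F uhat + F1 uhat, uhat - zstar⟫ ≤ -(γ*(μ*a^2)) := by
    have e1 : ⟪F1 uhat - F1 m + F m, zstar - uhat⟫
        = -⟪F1 uhat - F1 m + F m, uhat - zstar⟫ := by
      rw [← inner_neg_right]; congr 1; abel
    have hdiff := inner_sub_left (𝕜 := ℝ) (F m - F1 m - F uhat + F1 uhat)
      (F1 uhat - F1 m + F m) (uhat - zstar)
    rw [show (F m - F1 m - F uhat + F1 uhat) - (F1 uhat - F1 m + F m) = -(F uhat) by abel,
      inner_neg_left] at hdiff
    have hsm := hstrong uhat huhat zstar hzstar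
    have hvi := hVI uhat huhat
    have hFsplit : ⟪F uhat, uhat - zstar⟫
        = ⟪F uhat - F zstar, uhat - zstar⟫ + ⟪F zstar, uhat - zstar⟫ := by
      rw [← inner_add_left]; congr 1; abel
    have hge : μ*a^2 ≤ ⟪F uhat, uhat - zstar⟫ := by
      rw [hFsplit]; rw [← ha'] at hsm; linarith
    have hcomb : ⟪F1 uhat - F1 m + F m, zstar - uhat⟫
        + ⟪F m - F1 m - F uhat + F1 uhat, uhat - zstar⟫ ≤ -(μ*a^2) := by
      rw [e1]; linarith
    calc γ*⟪F1 uhat - F1 m + F m, zstar - uhat⟫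
          + γ*⟪F m - F1 m - F uhat + F1 uhat, uhat - zstar⟫
        = γ*(⟪F1 uhat - F1 m + F m, zstar - uhat⟫
          + ⟪F m - F1 m - F uhat + F1 uhat, uhat - zstar⟫) := by ring
      _ ≤ γ*(-(μ*a^2)) := mul_le_mul_of_nonneg_left hcomb hγpos.le
      _ = -(γ*(μ*a^2)) := by ring
  -- Step C : per-client projection step
  have hHnorm : ∀ i : Fin n, ‖Fi i m - F1 m - Fi i u + F1 u‖ ≤ 2*δ*Mu := by
    intro i
    have h1 := hrel i m hm u hu
    have h2 := hrel ⟨0, hn⟩ m hm u hu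
    rw [← hF1] at h2
    rw [show Fi i m - F1 m - Fi i u + F1 u
        = ((Fi i m - F m) - (Fi i u - F u)) - ((F1 m - F m) - (F1 u - F u)) by abel]
    calc ‖((Fi i m - F m) - (Fi i u - F u)) - ((F1 m - F m) - (F1 u - F u))‖
        ≤ ‖(Fi i m - F m) - (Fi i u - F u)‖ + ‖(F1 m - F m) - (F1 u - F u)‖ :=
          norm_sub_le _ _
      _ ≤ δ*‖m-u‖ + δ*‖m-u‖ := add_le_add h1 h2
      _ = 2*δ*Mu := by rw [← hMu']; ring
  have hper : ∀ i : Fin n, ‖zplus i - zstar‖^2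
      ≤ Nr^2 + 2*γ*⟪Fi i m - F1 m - Fi i u + F1 u, u - zstar⟫ + γ^2*(2*δ*Mu)^2 := by
    intro i
    have hp1 : ‖zplus i - zstar‖^2
        ≤ ‖(u + γ • (Fi i m - F1 m - Fi i u + F1 u)) - zstar‖^2 := by
      rw [hzplus i]
      exact proj_sq_le _ _ _ (hproj _ zstar hzstar)
    have hx : (u + γ • (Fi i m - F1 m - Fi i u + F1 u)) - zstar
        = (u - zstar) + γ • (Fi i m - F1 m - Fi i u + F1 u) := by abel
    rw [hx] at hp1
    rw [norm_add_sq_real, real_inner_smul_right, norm_smul, Real.norm_eq_abs,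
      mul_pow, sq_abs, real_inner_comm, ← hNr'] at hp1
    have hHsq : ‖Fi i m - F1 m - Fi i u + F1 u‖^2 ≤ (2*δ*Mu)^2 :=
      pow_le_pow_left₀ (norm_nonneg _) (hHnorm i) 2
    have hγsq : γ^2*‖Fi i m - F1 m - Fi i u + F1 u‖^2 ≤ γ^2*(2*δ*Mu)^2 :=
      mul_le_mul_of_nonneg_left hHsq (sq_nonneg γ)
    linarith [hp1, hγsq]
  have hsum1 : ∑ i, ‖zplus i - zstar‖^2
      ≤ (n:ℝ)*(Nr^2 + γ^2*(2*δ*Mu)^2)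
        + 2*γ*⟪∑ i, (Fi i m - F1 m - Fi i u + F1 u), u - zstar⟫ := by
    calc ∑ i, ‖zplus i - zstar‖^2
        ≤ ∑ i : Fin n, (Nr^2 + 2*γ*⟪Fi i m - F1 m - Fi i u + F1 u, u - zstar⟫
            + γ^2*(2*δ*Mu)^2) := Finset.sum_le_sum (fun i _ => hper i)
      _ = (n:ℝ)*(Nr^2 + γ^2*(2*δ*Mu)^2)
          + 2*γ*⟪∑ i, (Fi i m - F1 m - Fi i u + F1 u), u - zstar⟫ := by
        rw [Finset.sum_add_distrib, Finset.sum_add_distrib, Finset.sum_const,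
          Finset.sum_const, Finset.card_univ, Fintype.card_fin,
          ← Finset.mul_sum, ← sum_inner, nsmul_eq_mul, nsmul_eq_mul]
        ring
  have hn0 : (n:ℝ) ≠ 0 := Nat.cast_ne_zero.mpr (by omega)
  have hnpos : (0:ℝ) < n := by positivity
  have hHs : (n:ℝ)⁻¹ • ∑ i, (Fi i m - F1 m - Fi i u + F1 u)
      = F m - F1 m - F u + F1 u := by
    have hsplit : ∑ i : Fin n, (Fi i m - F1 m - Fi i u + F1 u)
        = ((∑ i, Fi i m) - n • F1 m - (∑ i, Fi i u)) + n • F1 u := by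
      rw [Finset.sum_add_distrib, Finset.sum_sub_distrib, Finset.sum_sub_distrib,
        Finset.sum_const, Finset.sum_const, Finset.card_univ, Fintype.card_fin]
    have hns : ∀ x : EuclideanSpace ℝ (Fin d), (n:ℝ)⁻¹ • (n • x) = x := by
      intro x; rw [← Nat.cast_smul_eq_nsmul ℝ, smul_smul, inv_mul_cancel₀ hn0, one_smul]
    rw [hsplit, smul_add, smul_sub, smul_sub, hns, hns, ← hF m, ← hF u]
  have hS : (n:ℝ)⁻¹ * ∑ i, ‖zplus i - zstar‖^2
      ≤ Nr^2 + 2*γ*⟪F m - F1 m - F u + F1 u, u - zstar⟫ + γ^2*(2*δ*Mu)^2 := by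
    have h1 := mul_le_mul_of_nonneg_left hsum1 (inv_nonneg.mpr hnpos.le)
    have h2 : (n:ℝ)⁻¹*⟪∑ i, (Fi i m - F1 m - Fi i u + F1 u), u - zstar⟫
        = ⟪F m - F1 m - F u + F1 u, u - zstar⟫ := by
      rw [← real_inner_smul_left, hHs]
    calc (n:ℝ)⁻¹ * ∑ i, ‖zplus i - zstar‖^2
        ≤ (n:ℝ)⁻¹ * ((n:ℝ)*(Nr^2 + γ^2*(2*δ*Mu)^2)
          + 2*γ*⟪∑ i, (Fi i m - F1 m - Fi i u + F1 u), u - zstar⟫) := h1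
      _ = (Nr^2 + γ^2*(2*δ*Mu)^2)
          + 2*γ*((n:ℝ)⁻¹*⟪∑ i, (Fi i m - F1 m - Fi i u + F1 u), u - zstar⟫) := by
        field_simp
      _ = Nr^2 + 2*γ*⟪F m - F1 m - F u + F1 u, u - zstar⟫ + γ^2*(2*δ*Mu)^2 := by
        rw [h2]; ring
  -- Step D : decompose the averaged correction
  have hD : ⟪F m - F1 m - F u + F1 u, u - zstar⟫
      = ⟪F m - F1 m - F uhat + F1 uhat, uhat - zstar⟫
        + ⟪F m - F1 m - F uhat + F1 uhat, u - uhat⟫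
        + ⟪(F1 u - F u) - (F1 uhat - F uhat), u - zstar⟫ := by
    rw [show F m - F1 m - F u + F1 u
        = (F m - F1 m - F uhat + F1 uhat) + ((F1 u - F u) - (F1 uhat - F uhat)) by abel,
      inner_add_left]
    congr 1
    rw [show u - zstar = (uhat - zstar) + (u - uhat) by abel, inner_add_right]
  have hrelhat : ‖F m - F1 m - F uhat + F1 uhat‖ ≤ δ*w := by
    have h2 := hrel ⟨0, hn⟩ uhat huhat m hm
    rw [← hF1, norm_sub_rev (uhat) m] at h2
    rw [show F m - F1 m - F uhat + F1 uhat = (F1 uhat - F uhat) - (F1 m - F m) by abel]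
    rw [← hw'] at h2; exact h2
  have hrelD : ‖(F1 u - F u) - (F1 uhat - F uhat)‖ ≤ δ*E := by
    have h2 := hrel ⟨0, hn⟩ u hu uhat huhat
    rw [← hF1] at h2
    rw [← hE'] at h2; exact h2
  have hd1 : ⟪F m - F1 m - F uhat + F1 uhat, u - uhat⟫ ≤ δ*w*E := by
    have h0 := real_inner_le_norm (F m - F1 m - F uhat + F1 uhat) (u - uhat)
    rw [← hE'] at h0
    have h1 := mul_le_mul_of_nonneg_right hrelhat hE0
    linarith
  have hd2 : ⟪(F1 u - F u) - (F1 uhat - F uhat), u - zstar⟫ ≤ δ*E*Nr := by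
    have h0 := real_inner_le_norm ((F1 u - F u) - (F1 uhat - F uhat)) (u - zstar)
    rw [← hNr'] at h0
    have h1 := mul_le_mul_of_nonneg_right hrelD hNr0
    linarith
  -- triangle inequalities
  have hNrle : Nr ≤ a + E := by
    rw [hNr', show u - zstar = (u - uhat) + (uhat - zstar) by abel]
    calc ‖(u - uhat) + (uhat - zstar)‖ ≤ ‖u - uhat‖ + ‖uhat - zstar‖ := norm_add_le _ _
      _ = a + E := by rw [← hE', ← ha']; ring
  have hMule : Mu ≤ w + E := by
    rw [hMu', show m - u = (m - uhat) + (uhat - u) by abel]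
    calc ‖(m - uhat) + (uhat - u)‖ ≤ ‖m - uhat‖ + ‖uhat - u‖ := norm_add_le _ _
      _ = w + E := by rw [norm_sub_rev uhat u, ← hE', ← hw']
  have hZrle : Zr ≤ t + a := by
    rw [hZr', show z - zstar = (z - uhat) + (uhat - zstar) by abel]
    calc ‖(z - uhat) + (uhat - zstar)‖ ≤ ‖z - uhat‖ + ‖uhat - zstar‖ := norm_add_le _ _
      _ = t + a := by rw [← ht', ← ha']
  have hMrle : Mr ≤ w + a := by
    rw [hMr', show m - zstar = (m - uhat) + (uhat - zstar) by abel]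
    calc ‖(m - uhat) + (uhat - zstar)‖ ≤ ‖m - uhat‖ + ‖uhat - zstar‖ := norm_add_le _ _
      _ = w + a := by rw [← hw', ← ha']
  -- identities
  have hId1 : Vz^2 = (1-p)*Zr^2 + p*Mr^2 - p*(1-p)*‖z - m‖^2 := by
    have h := convex_norm_id (z - zstar) (m - zstar) p
    rw [show (z - zstar) + p • ((m - zstar) - (z - zstar)) = v - zstar by
      rw [hveq, show (m - zstar) - (z - zstar) = m - z by abel]; abel] at h
    rw [show (z - zstar) - (m - zstar) = z - m by abel] at h
    rw [← hVz', ← hZr', ← hMr'] at h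
    exact h
  have hId2 : (1-p)*t^2 + p*w^2 = bb^2 + p*(1-p)*‖z - m‖^2 := by
    have h := two_point_id (v - uhat) (m - z) p
    rw [show (v - uhat) - p • (m - z) = z - uhat by rw [hveq]; abel] at h
    rw [show (v - uhat) + (1-p) • (m - z) = m - uhat by rw [hveq]; module] at h
    rw [norm_sub_rev m z] at h
    rw [← ht', ← hw', ← hbb'] at h
    exact h
  -- inexactness bounds
  have hE2 : 10*E^2 ≤ (γ*μ)*t^2 := by
    have h1 : μ*p/(4*L) ≤ γ*μ := by
      have := mul_le_mul_of_nonneg_right hγlow hμ.le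
      calc μ*p/(4*L) = p/(4*L)*μ := by ring
        _ ≤ γ*μ := this
    have h2 := mul_le_mul_of_nonneg_right h1 (sq_nonneg t)
    have h3 : (10:ℝ)*(μ*p/(40*L)) = μ*p/(4*L) := by field_simp; ring
    calc 10*E^2 ≤ 10*(μ*p/(40*L)*t^2) := by linarith [huacc]
      _ = (10*(μ*p/(40*L)))*t^2 := by ring
      _ = μ*p/(4*L)*t^2 := by rw [h3]
      _ ≤ γ*μ*t^2 := h2
  have hE1' : E^2 ≤ (p/40)*t^2 := by
    have h1 : μ*p/(40*L) ≤ p/40 := by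
      rw [div_le_div_iff₀ (by positivity) (by norm_num)]
      have h4 := mul_le_mul_of_nonneg_right hμL hp.le
      linarith
    have h2 := mul_le_mul_of_nonneg_right h1 (sq_nonneg t)
    linarith [huacc, h2]
  -- combine into MAIN inequality
  have h2γT2 : 2*γ*⟪F m - F1 m - F uhat + F1 uhat, u - uhat⟫ ≤ 2*γ*(δ*w*E) :=
    mul_le_mul_of_nonneg_left hd1 (by linarith)
  have h2γT3 : 2*γ*⟪(F1 u - F u) - (F1 uhat - F uhat), u - zstar⟫
      ≤ 2*γ*(δ*E*(a+E)) := by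
    have h' : δ*E*Nr ≤ δ*E*(a+E) :=
      mul_le_mul_of_nonneg_left hNrle (mul_nonneg hδ.le hE0)
    exact mul_le_mul_of_nonneg_left (le_trans hd2 h') (by linarith)
  have hNr2 : Nr^2 ≤ (a+E)^2 := pow_le_pow_left₀ hNr0 hNrle 2
  have hγsqMu : γ^2*(2*δ*Mu)^2 ≤ 4*(γ*δ)^2*(w+E)^2 := by
    have hMu2 : Mu^2 ≤ (w+E)^2 := pow_le_pow_left₀ hMu0 hMule 2
    calc γ^2*(2*δ*Mu)^2 = 4*(γ*δ)^2*Mu^2 := by ring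
      _ ≤ 4*(γ*δ)^2*(w+E)^2 := mul_le_mul_of_nonneg_left hMu2 (by positivity)
  have hMAIN : (n:ℝ)⁻¹ * ∑ i, ‖zplus i - zstar‖^2
      ≤ Vz^2 - bb^2 - 2*(γ*μ)*a^2
        + (2*E*a + E^2 + 2*(γ*δ)*(w+a+E)*E + 4*(γ*δ)^2*(w+E)^2) := by
    rw [hD] at hS
    linarith only [hS, hA, hB, h2γT2, h2γT3, hNr2, hγsqMu]
  -- final assembly
  have key := scalar_key p (γ*μ) (γ*δ) t w a E hp hp4 hg1pos hγμ hg2nn hg2sq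
    ht0 hw0 ha0 hE0 hE1' hE2
  have hZr2 : (γ*μ)/2*Zr^2 ≤ (γ*μ)/2*(t+a)^2 :=
    mul_le_mul_of_nonneg_left (pow_le_pow_left₀ hZr0 hZrle 2) (by linarith)
  have hMr2 : (γ*μ)/2*Mr^2 ≤ (γ*μ)/2*(w+a)^2 :=
    mul_le_mul_of_nonneg_left (pow_le_pow_left₀ hMr0 hMrle 2) (by linarith)
  linarith only [hMAIN, key, hId1, hId2, hZr2, hMr2]
end
end

section
/- Let Z ⊆ ℝ^d be a nonempty closed convex set, and let F_1, F : ℝ^d → ℝ^d with F_1 L-Lipschitz and monotone on Z (L > 0). Fix reals μ, p with 0 < μ ≤ L and 0 < p ≤ 1, fix z, m ∈ Z and τ ∈ ℝ, and fix γ > 0 with γ ≤ (1/L)·(H/(4·log(40L/(μp))) − 1), where H ≥ 1 is an integer. Let G(w) = F_1(w) − F_1(m) + F(m) + (1/γ)(w − z − τ(m − z)), let û ∈ Z be a solution of the VI on Z for G, set η = 1/(4(L + 1/γ)), and define the extragradient iterates u_0 = z and, for t = 0, …, H−1, u_{t+1/2} = proj_Z[u_t − η·G(u_t)], u_{t+1}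 = proj_Z[u_t − η·G(u_{t+1/2})]. Then ‖u_H − û‖² ≤ (μp/(40L))·‖z − û‖². -/
open scoped RealInnerProductSpace

noncomputable section
set_option maxHeartbeats 1000000

/-- Extragradient iterates: `u_{t+1/2} = proj_Z[u_t − η G(u_t)]`,
`u_{t+1} = proj_Z[u_t − η G(u_{t+1/2})]`. -/
def extraGrad {d : ℕ}
    (proj G : EuclideanSpace ℝ (Fin d) → EuclideanSpace ℝ (Fin d))
    (η : ℝ) (u0 : EuclideanSpace ℝ (Fin d)) : ℕ → EuclideanSpace ℝ (Fin d)
  | 0 => u0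
  | t + 1 =>
    let ut := extraGrad proj G η u0 t
    proj (ut - η • G (proj (ut - η • G ut)))

/-- `H` extragradient steps on the regularized operator
`G(w) = F₁(w) − F₁(m) + F(m) + (1/γ)(w − z − τ(m − z))` with step
`η = 1/(4(L + 1/γ))` reach accuracy `‖u_H − û‖² ≤ (μp/(40L))‖z − û‖²`,
provided `γ ≤ (1/L)(H/(4 log(40L/(μp))) − 1)`. -/
theorem extragradient_inner_loop_accuracy
    (d : ℕ) (Z : Set (EuclideanSpace ℝ (Fin d)))
    (hZne : Z.Nonempty) (hZcl : IsClosed Z) (hZcv : Convex ℝ Z)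
    (proj : EuclideanSpace ℝ (Fin d) → EuclideanSpace ℝ (Fin d))
    (hprojmem : ∀ x, proj x ∈ Z)
    (hproj : ∀ x, ∀ y ∈ Z, ⟪x - proj x, y - proj x⟫ ≤ 0)
    (F1 F : EuclideanSpace ℝ (Fin d) → EuclideanSpace ℝ (Fin d))
    (L : ℝ) (hL : 0 < L)
    (hLip : ∀ u ∈ Z, ∀ v ∈ Z, ‖F1 u - F1 v‖ ≤ L * ‖u - v‖)
    (hmono : ∀ u ∈ Z, ∀ v ∈ Z, 0 ≤ ⟪F1 u - F1 v, u - v⟫)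
    (μ p : ℝ) (hμ : 0 < μ) (hμL : μ ≤ L) (hp : 0 < p) (hp1 : p ≤ 1)
    (z m : EuclideanSpace ℝ (Fin d)) (hz : z ∈ Z) (hm : m ∈ Z) (τ : ℝ)
    (H : ℕ) (hH : 1 ≤ H)
    (γ : ℝ) (hγ : 0 < γ)
    (hγub : γ ≤ (1 / L) * ((H : ℝ) / (4 * Real.log (40 * L / (μ * p))) - 1))
    (G : EuclideanSpace ℝ (Fin d) → EuclideanSpace ℝ (Fin d))
    (hG : ∀ w, G w = F1 w - F1 m + F m + (1 / γ) • (w - z - τ • (m - z)))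
    (uhat : EuclideanSpace ℝ (Fin d)) (huhat : uhat ∈ Z)
    (hVIhat : ∀ w ∈ Z, 0 ≤ ⟪G uhat, w - uhat⟫)
    (η : ℝ) (hη : η = 1 / (4 * (L + 1 / γ))) :
    ‖extraGrad proj G η z H - uhat‖ ^ 2
      ≤ (μ * p / (40 * L)) * ‖z - uhat‖ ^ 2 := by
  have hγinv : (0:ℝ) < 1/γ := by positivity
  have hKc : (0:ℝ) < L + 1/γ := by positivity
  have hηpos : 0 < η := by rw [hη]; positivity
  have hη4 : η * (L + 1/γ) = 1/4 := by
    rw [hη]; field_simp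
  have hδeq : 2*η*(1/γ) = 1/(2*(γ*L+1)) := by
    have hc : (0:ℝ) < γ*L+1 := by positivity
    rw [hη]; field_simp; ring
  have hc1 : (1:ℝ) ≤ γ*L + 1 := by nlinarith
  have hcpos : (0:ℝ) < γ*L + 1 := by positivity
  have hGdiff : ∀ x y, G x - G y = (F1 x - F1 y) + (1/γ) • (x - y) := by
    intro x y; rw [hG, hG]; module
  have hGLip : ∀ x ∈ Z, ∀ y ∈ Z, ‖G x - G y‖ ≤ (L + 1/γ) * ‖x - y‖ := by
    intro x hx y hy
    rw [hGdiff]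
    calc ‖(F1 x - F1 y) + (1/γ) • (x - y)‖
        ≤ ‖F1 x - F1 y‖ + ‖(1/γ) • (x - y)‖ := norm_add_le _ _
      _ ≤ L * ‖x - y‖ + (1/γ) * ‖x - y‖ := by
          rw [norm_smul, Real.norm_eq_abs, abs_of_pos hγinv]
          exact add_le_add (hLip x hx y hy) le_rfl
      _ = (L + 1/γ) * ‖x - y‖ := by ring
  have hGsm : ∀ x ∈ Z, (1/γ) * ‖x - uhat‖^2 ≤ ⟪G x - G uhat, x - uhat⟫ := by
    intro x hx
    rw [hGdiff, inner_add_left, real_inner_smul_left, real_inner_self_eq_norm_sq]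
    have := hmono x hx uhat huhat
    linarith
  -- one-step contraction
  have key : ∀ u ∈ Z, ‖proj (u - η • G (proj (u - η • G u))) - uhat‖^2
      ≤ (1 - 1/(4*(γ*L+1))) * ‖u - uhat‖^2 := by
    intro u hu
    have hwZ : proj (u - η • G u) ∈ Z := hprojmem _
    have hvZ : proj (u - η • G (proj (u - η • G u))) ∈ Z := hprojmem _
    have h1 := hproj (u - η • G (proj (u - η • G u))) uhat huhat
    have h2 := hproj (u - η • G u) (proj (u - η • G (proj (u - η • G u)))) hvZ
    set w := proj (u - η • G u) with hw
    set v := proj (u - η • G w) with hv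
    have h3 := hGsm w hwZ
    have h4 := hVIhat w hwZ
    have cs : ⟪G w - G u, w - v⟫ ≤ ‖G w - G u‖ * ‖w - v‖ := real_inner_le_norm _ _
    have lip : ‖G w - G u‖ ≤ (L + 1/γ) * ‖w - u‖ := hGLip w hwZ u hu
    have h7 : 2*η*⟪G w - G u, w - v⟫ ≤ (1/16)*‖w - u‖^2 + ‖w - v‖^2 := by
      have e0 : ⟪G w - G u, w - v⟫ ≤ ((L + 1/γ) * ‖w - u‖) * ‖w - v‖ :=
        le_trans cs (mul_le_mul_of_nonneg_right lip (norm_nonneg _))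
      have e1 : 2*η*⟪G w - G u, w - v⟫ ≤ 2*η*(((L + 1/γ) * ‖w - u‖) * ‖w - v‖) := by
        have h2η : (0:ℝ) ≤ 2*η := by positivity
        nlinarith [e0]
      have e2 : 2*η*(((L + 1/γ) * ‖w - u‖) * ‖w - v‖) = (1/2)*(‖w - u‖*‖w - v‖) := by
        linear_combination (2*‖w - u‖*‖w - v‖) * hη4
      nlinarith [sq_nonneg (‖w - u‖/4 - ‖w - v‖)]
    have h3' : 2*η*((1/γ) * ‖w - uhat‖^2) ≤ 2*η*⟪G w - G uhat, w - uhat⟫ :=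
      mul_le_mul_of_nonneg_left h3 (by positivity)
    have h4' : 0 ≤ 2*η*⟪G uhat, w - uhat⟫ := mul_nonneg (by positivity) h4
    have hhalf : ‖u - uhat‖^2 ≤ 2*‖w - u‖^2 + 2*‖w - uhat‖^2 := by
      have e : u - uhat = (u - w) + (w - uhat) := by abel
      have tri : ‖u - uhat‖ ≤ ‖u - w‖ + ‖w - uhat‖ := by
        rw [e]; exact norm_add_le _ _
      have hn : ‖u - w‖ = ‖w - u‖ := norm_sub_rev _ _
      nlinarith [norm_nonneg (u - uhat), norm_nonneg (u - w), norm_nonneg (w - uhat),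
        sq_nonneg (‖u - w‖ - ‖w - uhat‖)]
    have hmain : ‖v - uhat‖^2
        ≤ ‖u - uhat‖^2 - (15/16)*‖w - u‖^2 - (2*η*(1/γ))*‖w - uhat‖^2 := by
      simp only [← real_inner_self_eq_norm_sq, inner_sub_left, inner_sub_right,
        real_inner_smul_left, real_inner_smul_right, real_inner_comm] at h1 h2 h3' h4' h7 ⊢
      linarith
    rw [hδeq] at hmain
    have hDle : 1/(2*(γ*L+1)) ≤ 15/16 := by
      rw [div_le_div_iff₀ (by positivity) (by norm_num)]
      nlinarith
    have hDpos : (0:ℝ) < 1/(2*(γ*L+1)) := by positivity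
    have hquart : 1/(4*(γ*L+1)) = (1/(2*(γ*L+1)))/2 := by
      rw [div_div]; ring_nf
    rw [hquart]
    nlinarith [hmain, hhalf, sq_nonneg (‖w - u‖), sq_nonneg (‖w - uhat‖),
      mul_nonneg hDpos.le (sub_nonneg.2 hhalf),
      mul_nonneg (sub_nonneg.2 hDle) (sq_nonneg (‖w - u‖ : ℝ))]
  -- membership of iterates
  have hmem : ∀ t, extraGrad proj G η z t ∈ Z := by
    intro t
    cases t with
    | zero => simpa [extraGrad] using hz
    | succ t => simp only [extraGrad]; exact hprojmem _
  have hρ0 : (0:ℝ) ≤ 1 - 1/(4*(γ*L+1)) := by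
    have : 1/(4*(γ*L+1)) ≤ 1/4 := by
      rw [div_le_div_iff₀ (by positivity) (by norm_num)]; nlinarith
    linarith
  have iter : ∀ t, ‖extraGrad proj G η z t - uhat‖^2
      ≤ (1 - 1/(4*(γ*L+1)))^t * ‖z - uhat‖^2 := by
    intro t
    induction t with
    | zero => simp [show extraGrad proj G η z 0 = z from rfl]
    | succ t ih =>
      have hstep := key (extraGrad proj G η z t) (hmem t)
      have hrw : extraGrad proj G η z (t+1)
          = proj (extraGrad proj G η z t
              - η • G (proj (extraGrad proj G η z t - η • G (extraGrad proj G η z t)))) := rfl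
      rw [hrw]
      calc ‖_ - uhat‖^2 ≤ (1 - 1/(4*(γ*L+1))) * ‖extraGrad proj G η z t - uhat‖^2 := hstep
        _ ≤ (1 - 1/(4*(γ*L+1))) * ((1 - 1/(4*(γ*L+1)))^t * ‖z - uhat‖^2) :=
            mul_le_mul_of_nonneg_left ih hρ0
        _ = (1 - 1/(4*(γ*L+1)))^(t+1) * ‖z - uhat‖^2 := by ring
  -- analytic tail
  have hμp : (0:ℝ) < μ*p := mul_pos hμ hp
  have hμpL : μ*p ≤ L := by nlinarith
  have hKpos : (0:ℝ) < 40*L/(μ*p) := by positivity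
  have hK1 : (1:ℝ) < 40*L/(μ*p) := by
    rw [lt_div_iff₀ hμp]; nlinarith
  have hlog : 0 < Real.log (40*L/(μ*p)) := Real.log_pos hK1
  have hc : γ*L + 1 ≤ (H:ℝ)/(4*Real.log (40*L/(μ*p))) := by
    have := mul_le_mul_of_nonneg_right hγub hL.le
    have he : (1/L) * ((H:ℝ)/(4*Real.log (40*L/(μ*p))) - 1) * L
        = (H:ℝ)/(4*Real.log (40*L/(μ*p))) - 1 := by
      field_simp
    rw [he] at this
    linarith
  have hHd : Real.log (40*L/(μ*p)) ≤ (H:ℝ) * (1/(4*(γ*L+1))) := by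
    have h4s : (0:ℝ) < 4*Real.log (40*L/(μ*p)) := by positivity
    have h1 := (le_div_iff₀ h4s).mp hc
    rw [mul_one_div, le_div_iff₀ (by positivity : (0:ℝ) < 4*(γ*L+1))]
    nlinarith
  have hexp : 1 - 1/(4*(γ*L+1)) ≤ Real.exp (-(1/(4*(γ*L+1)))) := by
    have := Real.add_one_le_exp (-(1/(4*(γ*L+1))))
    linarith
  have hpowH : (1 - 1/(4*(γ*L+1)))^H ≤ μ*p/(40*L) := by
    calc (1 - 1/(4*(γ*L+1)))^H ≤ (Real.exp (-(1/(4*(γ*L+1)))))^H :=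
          pow_le_pow_left₀ hρ0 hexp H
      _ = Real.exp ((H:ℝ) * (-(1/(4*(γ*L+1))))) := (Real.exp_nat_mul _ H).symm
      _ ≤ Real.exp (-(Real.log (40*L/(μ*p)))) := by
          apply Real.exp_le_exp.mpr
          nlinarith [hHd]
      _ = μ*p/(40*L) := by
          rw [Real.exp_neg, Real.exp_log hKpos, ← one_div, one_div_div]
  calc ‖extraGrad proj G η z H - uhat‖^2
      ≤ (1 - 1/(4*(γ*L+1)))^H * ‖z - uhat‖^2 := iter H
    _ ≤ (μ*p/(40*L)) * ‖z - uhat‖^2 :=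
        mul_le_mul_of_nonneg_right hpowH (sq_nonneg _)
end
end

section
/- Let Z ⊆ ℝ^d be a nonempty closed convex set, and let G : ℝ^d → ℝ^d be L'-Lipschitz and μ'-strongly monotone on Z with 0 < μ' ≤ L'. Let u* ∈ Z be a solution of the VI for G on Z. Set η = 1/(4L') and define the extragradient iterates from any u_0 ∈ Z: for t ≥ 0, u_{t+1/2} = proj_Z[u_t − η·G(u_t)] and u_{t+1} = proj_Z[u_t − η·G(u_{t+1/2})]. Then for every H ≥ 0, ‖u_H − u*‖² ≤ (1 − μ'/(4L'))^H · ‖u_0 − u*‖², and in particular ‖u_H − u*‖² ≤ exp(−μ'H/(4L')) · ‖u_0 − u*‖². -/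
open scoped RealInnerProductSpace

noncomputable section
set_option maxHeartbeats 1000000

lemma three_pt {E : Type*} [NormedAddCommGroup E] [InnerProductSpace ℝ E] (x y z : E) :
    ‖x - z‖ ^ 2 = ‖x - y‖ ^ 2 + 2 * ⟪x - y, y - z⟫ + ‖y - z‖ ^ 2 := by
  have h : x - z = (x - y) + (y - z) := by abel
  rw [h, norm_add_sq_real]

lemma eg_step
    (d : ℕ) (Z : Set (EuclideanSpace ℝ (Fin d)))
    (proj : EuclideanSpace ℝ (Fin d) → EuclideanSpace ℝ (Fin d))
    (hprojmem : ∀ x, proj x ∈ Z)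
    (hproj : ∀ x, ∀ y ∈ Z, ⟪x - proj x, y - proj x⟫ ≤ 0)
    (G : EuclideanSpace ℝ (Fin d) → EuclideanSpace ℝ (Fin d))
    (L' μ' : ℝ) (hμ' : 0 < μ') (hμL : μ' ≤ L')
    (hLip : ∀ u ∈ Z, ∀ v ∈ Z, ‖G u - G v‖ ≤ L' * ‖u - v‖)
    (hsm : ∀ u ∈ Z, ∀ v ∈ Z, μ' * ‖u - v‖ ^ 2 ≤ ⟪G u - G v, u - v⟫)
    (ustar : EuclideanSpace ℝ (Fin d)) (hustar : ustar ∈ Z)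
    (hVI : ∀ z ∈ Z, 0 ≤ ⟪G ustar, z - ustar⟫)
    (η : ℝ) (hη : η = 1 / (4 * L'))
    (u : EuclideanSpace ℝ (Fin d)) (hu : u ∈ Z) :
    ‖proj (u - η • G (proj (u - η • G u))) - ustar‖ ^ 2
      ≤ (1 - μ' / (4 * L')) * ‖u - ustar‖ ^ 2 := by
  have hL : 0 < L' := lt_of_lt_of_le hμ' hμL
  have hη0 : 0 < η := by rw [hη]; positivity
  have hηL : η * L' = 1 / 4 := by rw [hη]; field_simp
  set v := proj (u - η • G u) with hvdef
  set w := proj (u - η • G v) with hwdef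
  have hv : v ∈ Z := hprojmem _
  have hw : w ∈ Z := hprojmem _
  -- scalar abbreviations
  set a := ‖u - ustar‖ with ha
  set b := ‖u - v‖ with hb
  set c := ‖v - w‖ with hc
  set e := ‖v - ustar‖ with he
  set f := ‖u - w‖ with hf
  set g := ‖w - ustar‖ with hg
  set p := ⟪u - w, w - ustar⟫ with hp
  set q := ⟪u - v, w - v⟫ with hq
  set r := ⟪G v, w - v⟫ with hr
  set s := ⟪G v, v - ustar⟫ with hs
  set t := ⟪G u, w - v⟫ with ht
  set m := ⟪G u - G v, w - v⟫ with hm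
  have hb0 : 0 ≤ b := norm_nonneg _
  have hc0 : 0 ≤ c := norm_nonneg _
  have he0 : 0 ≤ e := norm_nonneg _
  -- projection inequality for w at ustar
  have hA : η * (r + s) ≤ p := by
    have := hproj (u - η • G v) ustar hustar
    rw [← hwdef] at this
    have hexp : (u - η • G v) - w = (u - w) - η • G v := by abel
    rw [hexp, inner_sub_left, real_inner_smul_left] at this
    have hsplit : (⟪G v, ustar - w⟫ : ℝ) = -(r + s) := by
      have h2 : ustar - w = -((w - v) + (v - ustar)) := by abel
      rw [h2, inner_neg_right, inner_add_right]
    have hneg : (⟪u - w, ustar - w⟫ : ℝ) = -p := by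
      have h2 : ustar - w = -(w - ustar) := by abel
      rw [h2, inner_neg_right]
    rw [hsplit, hneg] at this
    linarith
  -- projection inequality for v at w
  have hB : q ≤ η * t := by
    have := hproj (u - η • G u) w hw
    rw [← hvdef] at this
    have hexp : (u - η • G u) - v = (u - v) - η • G u := by abel
    rw [hexp, inner_sub_left, real_inner_smul_left] at this
    linarith
  -- strong monotonicity + VI
  have hCD : μ' * e ^ 2 ≤ s := by
    have h1 := hsm v hv ustar hustar
    have h2 := hVI v hv
    have h3 : (⟪G v - G ustar, v - ustar⟫ : ℝ) = s - ⟪G ustar, v - ustar⟫ := by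
      rw [hs, inner_sub_left]
    rw [h3] at h1
    linarith
  -- Lipschitz + Cauchy-Schwarz
  have hmt : m = t - r := by rw [hm, ht, hr, inner_sub_left]
  have hF : m ≤ L' * b * c := by
    have h1 : m ≤ ‖G u - G v‖ * ‖w - v‖ := real_inner_le_norm _ _
    have h2 : ‖G u - G v‖ ≤ L' * b := hLip u hu v hv
    have h3 : ‖w - v‖ = c := norm_sub_rev _ _
    calc m ≤ ‖G u - G v‖ * ‖w - v‖ := h1
      _ ≤ (L' * b) * ‖w - v‖ := by
          apply mul_le_mul_of_nonneg_right h2 (norm_nonneg _)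
      _ = L' * b * c := by rw [h3]
  -- identities
  have I1 : a ^ 2 = f ^ 2 + 2 * p + g ^ 2 := three_pt u w ustar
  have I2 : f ^ 2 = b ^ 2 - 2 * q + c ^ 2 := by
    have := three_pt u v w
    have h2 : (⟪u - v, v - w⟫ : ℝ) = -q := by
      have h3 : v - w = -(w - v) := by abel
      rw [h3, inner_neg_right]
    rw [h2] at this
    linarith
  have htri : a ≤ b + e := by
    rw [ha, hb, he]
    exact norm_sub_le_norm_sub_add_norm_sub u v ustar
  -- 2η m ≤ (1/2) b c
  have h2ηm : 2 * η * m ≤ 1 / 2 * (b * c) := by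
    have h1 : 2 * η * m ≤ 2 * η * (L' * b * c) := by
      have h0 : 0 ≤ 2 * η * (L' * b * c - m) :=
        mul_nonneg (by linarith : (0:ℝ) ≤ 2 * η) (sub_nonneg.2 hF)
      linarith [h0]
    have h2 : 2 * η * (L' * b * c) = 1 / 2 * (b * c) := by
      have : 2 * η * (L' * b * c) = 2 * (η * L') * (b * c) := by ring
      rw [this, hηL]; ring
    linarith
  -- key contraction: g² ≤ a² - (15/16) b² - 2ημ' e²
  have h2ημ : 2 * η * μ' = μ' / (2 * L') := by rw [hη]; field_simp; ring
  have h2ηs : μ' / (2 * L') * e ^ 2 ≤ 2 * η * s := by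
    have h1 : 2 * η * (μ' * e ^ 2) ≤ 2 * η * s := by
      have h0 : 0 ≤ 2 * η * (s - μ' * e ^ 2) :=
        mul_nonneg (by linarith : (0:ℝ) ≤ 2 * η) (sub_nonneg.2 hCD)
      linarith [h0]
    have h2 : 2 * η * (μ' * e ^ 2) = μ' / (2 * L') * e ^ 2 := by
      rw [hη]; field_simp; ring
    linarith
  have key : g ^ 2 ≤ a ^ 2 - 15 / 16 * b ^ 2 - μ' / (2 * L') * e ^ 2 := by
    -- g² = a² - f² - 2p ≤ a² - f² - 2η(r+s) = a² - b² + 2q - c² - 2ηr - 2ηs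
    -- q ≤ ηt, m = t - r: 2q - 2ηr ≤ 2ηt - 2ηr = 2ηm ≤ bc/2
    -- bc/2 ≤ b²/16 + c²
    have hamgm : 1 / 2 * (b * c) ≤ 1 / 16 * b ^ 2 + c ^ 2 := by linarith [sq_nonneg (b / 4 - c)]
    have hηm : η * m = η * t - η * r := by rw [hmt]; ring
    have hA' : η * r + η * s ≤ p := by rw [mul_add] at hA; exact hA
    linarith [hA', hB, h2ηm, h2ηs, I1, I2, hηm, hamgm]
  -- final comparison
  have hk1 : μ' / (4 * L') ≤ 1 / 4 := by
    rw [div_le_iff₀ (by positivity)]; linarith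
  have hk0 : 0 < μ' / (4 * L') := by positivity
  have hk2 : μ' / (2 * L') = 2 * (μ' / (4 * L')) := by field_simp; ring
  have ha2 : a ^ 2 ≤ (b + e) ^ 2 := by
    have := pow_le_pow_left₀ (norm_nonneg (u - ustar)) htri 2
    simpa using this
  set k := μ' / (4 * L') with hkdef
  rw [hk2] at key
  have h1 : k * a ^ 2 ≤ k * (b + e) ^ 2 := mul_le_mul_of_nonneg_left ha2 hk0.le
  have h2 : k * (b + e) ^ 2 ≤ 2 * k * b ^ 2 + 2 * k * e ^ 2 := by
    have h0 : 0 ≤ k * (b - e) ^ 2 := mul_nonneg hk0.le (sq_nonneg (b - e))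
    linarith [h0]
  have h3 : 2 * k * b ^ 2 ≤ 15 / 16 * b ^ 2 := by
    linarith [mul_le_mul_of_nonneg_right hk1 (sq_nonneg b), sq_nonneg b]
  linarith [key, h1, h2, h3]

/-- linear convergence of the extragradient method with step
`η = 1/(4L')` for an `L'`-Lipschitz, `μ'`-strongly monotone operator. -/
theorem extragradient_linear_convergence
    (d : ℕ) (Z : Set (EuclideanSpace ℝ (Fin d)))
    (hZne : Z.Nonempty) (hZcl : IsClosed Z) (hZcv : Convex ℝ Z)
    (proj : EuclideanSpace ℝ (Fin d) → EuclideanSpace ℝ (Fin d))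
    (hprojmem : ∀ x, proj x ∈ Z)
    (hproj : ∀ x, ∀ y ∈ Z, ⟪x - proj x, y - proj x⟫ ≤ 0)
    (G : EuclideanSpace ℝ (Fin d) → EuclideanSpace ℝ (Fin d))
    (L' μ' : ℝ) (hμ' : 0 < μ') (hμL : μ' ≤ L')
    (hLip : ∀ u ∈ Z, ∀ v ∈ Z, ‖G u - G v‖ ≤ L' * ‖u - v‖)
    (hsm : ∀ u ∈ Z, ∀ v ∈ Z, μ' * ‖u - v‖ ^ 2 ≤ ⟪G u - G v, u - v⟫)
    (ustar : EuclideanSpace ℝ (Fin d)) (hustar : ustar ∈ Z)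
    (hVI : ∀ z ∈ Z, 0 ≤ ⟪G ustar, z - ustar⟫)
    (η : ℝ) (hη : η = 1 / (4 * L'))
    (u0 : EuclideanSpace ℝ (Fin d)) (hu0 : u0 ∈ Z) :
    ∀ H : ℕ,
      ‖extraGrad proj G η u0 H - ustar‖ ^ 2
          ≤ (1 - μ' / (4 * L')) ^ H * ‖u0 - ustar‖ ^ 2 ∧
      ‖extraGrad proj G η u0 H - ustar‖ ^ 2
          ≤ Real.exp (-(μ' * (H : ℝ)) / (4 * L')) * ‖u0 - ustar‖ ^ 2 := by
  have hL : 0 < L' := lt_of_lt_of_le hμ' hμL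
  set k := μ' / (4 * L') with hkdef
  have hk1 : k ≤ 1 / 4 := by
    rw [hkdef, div_le_iff₀ (by positivity)]; linarith
  have hk0 : 0 < k := by rw [hkdef]; positivity
  have hr0 : (0:ℝ) ≤ 1 - k := by linarith
  have hrexp : 1 - k ≤ Real.exp (-k) := by
    have := Real.add_one_le_exp (-k)
    linarith
  -- geometric bound by induction
  have hgeo : ∀ H : ℕ,
      ‖extraGrad proj G η u0 H - ustar‖ ^ 2 ≤ (1 - k) ^ H * ‖u0 - ustar‖ ^ 2 := by
    intro H
    induction H with
    | zero => simp [extraGrad]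
    | succ n ih =>
        have hmem : extraGrad proj G η u0 n ∈ Z := by
          cases n with
          | zero => exact hu0
          | succ m => exact hprojmem _
        have hstep := eg_step d Z proj hprojmem hproj G L' μ' hμ' hμL hLip hsm
          ustar hustar hVI η hη (extraGrad proj G η u0 n) hmem
        have hunf : extraGrad proj G η u0 (n + 1)
            = proj (extraGrad proj G η u0 n
              - η • G (proj (extraGrad proj G η u0 n - η • G (extraGrad proj G η u0 n)))) := by
          rfl
        rw [hunf]
        calc ‖_ - ustar‖ ^ 2 ≤ (1 - k) * ‖extraGrad proj G η u0 n - ustar‖ ^ 2 := hstep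
          _ ≤ (1 - k) * ((1 - k) ^ n * ‖u0 - ustar‖ ^ 2) :=
              mul_le_mul_of_nonneg_left ih hr0
          _ = (1 - k) ^ (n + 1) * ‖u0 - ustar‖ ^ 2 := by ring
  intro H
  refine ⟨hgeo H, ?_⟩
  have hpow : (1 - k) ^ H ≤ Real.exp (-k) ^ H := pow_le_pow_left₀ hr0 hrexp H
  have hexp : Real.exp (-k) ^ H = Real.exp (-(μ' * (H : ℝ)) / (4 * L')) := by
    rw [← Real.exp_nat_mul]
    congr 1
    rw [hkdef]
    field_simp
  calc ‖extraGrad proj G η u0 H - ustar‖ ^ 2 ≤ (1 - k) ^ H * ‖u0 - ustar‖ ^ 2 := hgeo H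
    _ ≤ Real.exp (-k) ^ H * ‖u0 - ustar‖ ^ 2 :=
        mul_le_mul_of_nonneg_right hpow (sq_nonneg _)
    _ = _ := by rw [hexp]
end
end

section
/- Let n ≥ 1, q ≥ 1 be integers and d = q·n. For all vectors a_1, …, a_n ∈ ℝ^d, writing ā = (1/n)∑_{j=1}^n a_j, the permutation compressors satisfy: E_π‖ (1/n)∑_{i=1}^n Q_i^π(a_i) − ā ‖² ≤ (1/n)∑_{i=1}^n ‖a_i − ā‖². -/
noncomputable section

/-- Sum over all permutations of a function of `π k` equals a constant times the
full sum. -/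
lemma sum_perm_apply_aux (d : ℕ) (k : Fin d) (h : Fin d → ℝ) :
    (d : ℝ) * ∑ π : Equiv.Perm (Fin d), h (π k)
      = (Fintype.card (Equiv.Perm (Fin d)) : ℝ) * ∑ m, h m := by
  classical
  set c : ℕ := (Finset.univ.filter fun π : Equiv.Perm (Fin d) => π k = k).card with hc
  have hfib : ∀ m : Fin d,
      (Finset.univ.filter fun π : Equiv.Perm (Fin d) => π k = m).card = c := by
    intro m
    rw [hc]
    apply Finset.card_bij' (i := fun π _ => Equiv.swap k m * π)
      (j := fun π _ => Equiv.swap k m * π)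
    · intro π hπ
      simp only [Finset.mem_filter, Finset.mem_univ, true_and] at hπ ⊢
      simp [hπ]
    · intro π hπ
      simp only [Finset.mem_filter, Finset.mem_univ, true_and] at hπ ⊢
      simp [hπ]
    · intro π hπ
      simp [← mul_assoc]
    · intro π hπ
      simp [← mul_assoc]
  have hcard : Fintype.card (Equiv.Perm (Fin d)) = d * c := by
    have := Finset.card_eq_sum_card_fiberwise
      (f := fun π : Equiv.Perm (Fin d) => π k) (s := Finset.univ) (t := Finset.univ)
      (fun x _ => Finset.mem_univ _)
    rw [Finset.card_univ] at this
    rw [this]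
    simp [hfib, Finset.card_univ, mul_comm]
  have hsum : ∑ π : Equiv.Perm (Fin d), h (π k) = (c : ℝ) * ∑ m, h m := by
    rw [← Finset.sum_fiberwise Finset.univ (fun π : Equiv.Perm (Fin d) => π k)
      (fun π => h (π k))]
    rw [Finset.mul_sum]
    refine Finset.sum_congr rfl fun m _ => ?_
    rw [Finset.sum_congr rfl (g := fun _ => h m)
      (fun π hπ => by
        simp only [Finset.mem_filter, Finset.mem_univ, true_and] at hπ
        rw [hπ]),
      Finset.sum_const, hfib m, nsmul_eq_mul]
  rw [hsum, hcard]
  push_cast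
  ring

/-- variance bound for the permutation compressors:
`E_π ‖(1/n)∑ᵢ Q_i^π(aᵢ) − ā‖² ≤ (1/n)∑ᵢ ‖aᵢ − ā‖²` where `ā = (1/n)∑ⱼ aⱼ`. -/
theorem perm_compressor_variance_bound
    (n q d : ℕ) (hn : 1 ≤ n) (hq : 1 ≤ q) (hd : d = q * n)
    (a : Fin n → EuclideanSpace ℝ (Fin d)) :
    (Fintype.card (Equiv.Perm (Fin d)) : ℝ)⁻¹ *
        ∑ π : Equiv.Perm (Fin d),
          ‖(n : ℝ)⁻¹ • ∑ i, Qperm n q d π i (a i) - (n : ℝ)⁻¹ • ∑ j, a j‖ ^ 2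
      ≤ (n : ℝ)⁻¹ * ∑ i, ‖a i - (n : ℝ)⁻¹ • ∑ j, a j‖ ^ 2 := by
  classical
  have hq0 : 0 < q := hq
  have hn0 : 0 < n := hn
  have hd0 : 0 < d := by subst hd; positivity
  set abar : EuclideanSpace ℝ (Fin d) := (n : ℝ)⁻¹ • ∑ j, a j with habar
  set b : Fin n → EuclideanSpace ℝ (Fin d) := fun i => a i - abar with hb
  have hblk : ∀ j : Fin d, (j : ℕ) / q < n := by
    intro j
    have h2 := j.2
    have h3 : (j : ℕ) < q * n := by rw [← hd]; exact h2
    exact Nat.div_lt_of_lt_mul h3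
  set I : Fin d → Fin n := fun j => ⟨(j : ℕ) / q, hblk j⟩ with hI
  -- norm squared as sum of squares of coordinates
  have hnorm : ∀ x : EuclideanSpace ℝ (Fin d), ‖x‖ ^ 2 = ∑ k, x k ^ 2 := by
    intro x
    rw [EuclideanSpace.norm_eq, Real.sq_sqrt (by positivity)]
    simp [sq_abs]
  -- coordinatewise formula
  have hcoord : ∀ (π : Equiv.Perm (Fin d)) (k : Fin d),
      ((n : ℝ)⁻¹ • ∑ i, Qperm n q d π i (a i) - abar) k = b (I (π⁻¹ k)) k := by
    intro π k
    have h1 : (∑ i, Qperm n q d π i (a i)) k = (n : ℝ) * a (I (π⁻¹ k)) k := by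
      rw [WithLp.ofLp_sum, Finset.sum_apply]
      have hterm : ∀ i : Fin n, Qperm n q d π i (a i) k
          = if q * (i : ℕ) ≤ ((π⁻¹ k : Fin d) : ℕ) ∧ ((π⁻¹ k : Fin d) : ℕ) < q * ((i : ℕ) + 1)
            then (n : ℝ) * a i k else 0 := by
        intro i
        simp only [Qperm, PiLp.smul_apply, smul_eq_mul]
        rw [WithLp.ofLp_sum, Finset.sum_apply]
        have hsingle : ∀ j : Fin d, EuclideanSpace.single (π j) (a i (π j)) k
            = if π⁻¹ k = j then a i k else 0 := by
          intro j
          rw [EuclideanSpace.single_apply]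
          by_cases hj : π⁻¹ k = j
          · subst hj
            rw [(Equiv.Perm.eq_inv_iff_eq.mp rfl : π (π⁻¹ k) = k), if_pos rfl, if_pos rfl]
          · rw [if_neg, if_neg hj]
            intro hkj
            exact hj (by rw [hkj]; simp)
        rw [Finset.sum_congr rfl (fun j _ => hsingle j), Finset.sum_ite_eq]
        simp only [Finset.mem_filter, Finset.mem_univ, true_and]
        split_ifs <;> ring
      rw [Finset.sum_congr rfl (fun i _ => hterm i)]
      rw [Finset.sum_eq_single (I (π⁻¹ k))]
      · rw [if_pos]
        constructor
        · simpa [hI, mul_comm] using Nat.div_mul_le_self ((π⁻¹ k : Fin d) : ℕ) q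
        · simp only [hI, Nat.mul_succ]
          have h1 := Nat.div_add_mod ((π⁻¹ k : Fin d) : ℕ) q
          have h2 := Nat.mod_lt ((π⁻¹ k : Fin d) : ℕ) hq0
          omega
      · intro i _ hne
        rw [if_neg]
        intro hcond
        apply hne
        have : ((π⁻¹ k : Fin d) : ℕ) / q = (i : ℕ) := by
          apply Nat.div_eq_of_lt_le
          · rw [mul_comm]; exact hcond.1
          · rw [mul_comm]; exact hcond.2
        exact Fin.ext this.symm
      · intro habs
        exact absurd (Finset.mem_univ _) habs
    have hnne : (n : ℝ) ≠ 0 := by positivity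
    simp only [PiLp.sub_apply, PiLp.smul_apply, smul_eq_mul, hb]
    rw [h1, ← mul_assoc, inv_mul_cancel₀ hnne, one_mul]
  -- block sums
  have hblocksum : ∀ g : Fin n → ℝ, ∑ m : Fin d, g (I m) = (q : ℝ) * ∑ i, g i := by
    intro g
    rw [← Finset.sum_fiberwise Finset.univ I (fun m => g (I m)), Finset.mul_sum]
    refine Finset.sum_congr rfl fun i _ => ?_
    have hcardq : (Finset.univ.filter fun m : Fin d => I m = i).card = q := by
      have hmem : ∀ x : Fin q, q * (i : ℕ) + (x : ℕ) < d := by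
        intro x
        have hx := x.2
        have hi := i.2
        rw [hd]
        calc q * (i : ℕ) + (x : ℕ) < q * ((i : ℕ) + 1) := by rw [Nat.mul_succ]; omega
        _ ≤ q * n := Nat.mul_le_mul_left q (by omega)
      have : (Finset.univ.filter fun m : Fin d => I m = i).card
          = (Finset.univ : Finset (Fin q)).card := by
        refine Finset.card_bij' (fun m _ => (⟨(m : ℕ) % q, Nat.mod_lt _ hq0⟩ : Fin q))
          (fun x _ => (⟨q * (i : ℕ) + (x : ℕ), hmem x⟩ : Fin d)) ?_ ?_ ?_ ?_
        · intro m _; exact Finset.mem_univ _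
        · intro x _
          simp only [Finset.mem_filter, Finset.mem_univ, true_and, hI]
          apply Fin.ext
          show (q * (i : ℕ) + (x : ℕ)) / q = (i : ℕ)
          rw [Nat.mul_add_div hq0, Nat.div_eq_of_lt x.2, add_zero]
        · intro m hm
          simp only [Finset.mem_filter, Finset.mem_univ, true_and, hI] at hm
          apply Fin.ext
          show q * (i : ℕ) + (m : ℕ) % q = (m : ℕ)
          have h2 : (m : ℕ) / q = (i : ℕ) := congrArg Fin.val hm
          rw [← h2]
          exact Nat.div_add_mod (m : ℕ) q
        · intro x _
          apply Fin.ext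
          show (q * (i : ℕ) + (x : ℕ)) % q = (x : ℕ)
          rw [Nat.mul_add_mod, Nat.mod_eq_of_lt x.2]
      rw [this, Finset.card_univ, Fintype.card_fin]
    rw [Finset.sum_congr rfl (g := fun _ => g i)
        (fun m hm => by
          simp only [Finset.mem_filter, Finset.mem_univ, true_and] at hm
          rw [hm]),
      Finset.sum_const, hcardq, nsmul_eq_mul]
  -- rewrite each summand
  have hrw : ∀ π : Equiv.Perm (Fin d),
      ‖(n : ℝ)⁻¹ • ∑ i, Qperm n q d π i (a i) - abar‖ ^ 2
        = ∑ k, (b (I (π⁻¹ k)) k) ^ 2 := by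
    intro π
    rw [hnorm]
    exact Finset.sum_congr rfl fun k _ => by rw [hcoord π k]
  have hP0 : (0 : ℝ) < (Fintype.card (Equiv.Perm (Fin d)) : ℝ) := by
    exact_mod_cast Fintype.card_pos
  have key : ∑ π : Equiv.Perm (Fin d),
      ‖(n : ℝ)⁻¹ • ∑ i, Qperm n q d π i (a i) - abar‖ ^ 2
      = (Fintype.card (Equiv.Perm (Fin d)) : ℝ) * ((n : ℝ)⁻¹ * ∑ i, ‖b i‖ ^ 2) := by
    rw [Finset.sum_congr rfl (fun π _ => hrw π), Finset.sum_comm]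
    have hk : ∀ k : Fin d, ∑ π : Equiv.Perm (Fin d), (b (I (π⁻¹ k)) k) ^ 2
        = (Fintype.card (Equiv.Perm (Fin d)) : ℝ) / d * ((q : ℝ) * ∑ i, (b i k) ^ 2) := by
      intro k
      have e1 : ∑ π : Equiv.Perm (Fin d), (b (I (π⁻¹ k)) k) ^ 2
          = ∑ π : Equiv.Perm (Fin d), (b (I (π k)) k) ^ 2 :=
        Equiv.sum_comp (Equiv.inv (Equiv.Perm (Fin d))) (fun σ => (b (I (σ k)) k) ^ 2)
      have e2 := sum_perm_apply_aux d k (fun m => (b (I m) k) ^ 2)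
      have hd0' : (d : ℝ) ≠ 0 := by positivity
      rw [hblocksum (fun i => (b i k) ^ 2)] at e2
      rw [e1]
      field_simp
      linear_combination e2
    rw [Finset.sum_congr rfl (fun k _ => hk k)]
    have hbn : ∑ i, ‖b i‖ ^ 2 = ∑ i, ∑ k, (b i k) ^ 2 :=
      Finset.sum_congr rfl fun i _ => hnorm _
    have hdr : (d : ℝ) = (q : ℝ) * (n : ℝ) := by rw [hd]; push_cast; ring
    have hqr : (q : ℝ) ≠ 0 := by positivity
    have hnr : (n : ℝ) ≠ 0 := by positivity
    rw [hbn]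
    rw [Finset.sum_comm (γ := Fin n) (f := fun i k => (b i k) ^ 2)]
    rw [← Finset.mul_sum, ← Finset.mul_sum]
    rw [hdr]
    field_simp
  rw [key, ← mul_assoc, inv_mul_cancel₀ (ne_of_gt hP0), one_mul]
end
end

section
/- Let d ≥ 1, q ≥ 1 be integers, n = q·d with n > 1, and let s : {1, …, n} → {1, …, d} be the fixed map in which each value k ∈ {1, …, d} is attained exactly q times. For a permutation σ of {1, …, n}, define for u ∈ ℝ^d and i ∈ {1, …, n} the compressor Q_i^σ(u) = d · u_{s(σ(i))} e_{s(σ(i))}, where e_1, …, e_d is the standard basis of ℝ^d. Then, with E_σ denoting the average over all n! permutations σ of {1, …, n}: (a) E_σ[Q_i^σ(u)] = u for every u ∈ ℝ^d and every i; (b) for all a_1, …, a_n ∈ ℝ^d with ā = (1/n)∑_{j=1}^n a_j, E_σ‖ (1/n)∑_{i=1}^n Q_i^σ(a_i) − ā ‖² ≤ (1/n)∑_{i=1}^n ‖a_i − ā‖². -/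
noncomputable section

open Finset

/-- Two-transitivity of the symmetric group. -/
lemma exists_perm_map_pair {α : Type*} [DecidableEq α] {x y x' y' : α}
    (hxy : x ≠ y) (hxy' : x' ≠ y') :
    ∃ τ : Equiv.Perm α, τ x = x' ∧ τ y = y' := by
  have hwx' : Equiv.swap x x' y ≠ x' := by
    rcases eq_or_ne y x' with h | h
    · subst h; rw [Equiv.swap_apply_right]; exact hxy
    · rw [Equiv.swap_apply_of_ne_of_ne hxy.symm h]; exact h
  refine ⟨Equiv.swap (Equiv.swap x x' y) y' * Equiv.swap x x', ?_, ?_⟩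
  · simp only [Equiv.Perm.mul_apply, Equiv.swap_apply_left]
    exact Equiv.swap_apply_of_ne_of_ne (Ne.symm hwx') hxy'
  · simp only [Equiv.Perm.mul_apply]
    exact Equiv.swap_apply_left _ _

/-- All one-point fibers in the symmetric group have the same cardinality. -/
lemma fiber1_card_eq {n : ℕ} (i x i' x' : Fin n) :
    (Finset.univ.filter fun σ : Equiv.Perm (Fin n) => σ i = x).card
      = (Finset.univ.filter fun σ : Equiv.Perm (Fin n) => σ i' = x').card := by
  refine Finset.card_bij' (fun σ _ => Equiv.swap x x' * σ * Equiv.swap i' i)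
    (fun σ _ => Equiv.swap x' x * σ * Equiv.swap i i') ?_ ?_ ?_ ?_
  · intro σ hσ
    simp only [Finset.mem_filter, Finset.mem_univ, true_and] at hσ ⊢
    simp [Equiv.Perm.mul_apply, Equiv.swap_apply_left, hσ]
  · intro σ hσ
    simp only [Finset.mem_filter, Finset.mem_univ, true_and] at hσ ⊢
    simp [Equiv.Perm.mul_apply, Equiv.swap_apply_left, hσ]
  · intro σ _
    ext t
    simp [Equiv.Perm.mul_apply, Equiv.swap_comm x' x, Equiv.swap_comm i i',
      Equiv.swap_apply_self]
  · intro σ _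
    ext t
    simp [Equiv.Perm.mul_apply, Equiv.swap_comm x' x, Equiv.swap_comm i i',
      Equiv.swap_apply_self]

/-- All two-point fibers in the symmetric group have the same cardinality. -/
lemma fiber2_card_eq {n : ℕ} {i j i' j' : Fin n} {p p' : Fin n × Fin n}
    (hij : i ≠ j) (hp : p.1 ≠ p.2) (hij' : i' ≠ j') (hp' : p'.1 ≠ p'.2) :
    (Finset.univ.filter fun σ : Equiv.Perm (Fin n) => (σ i, σ j) = p).card
      = (Finset.univ.filter fun σ : Equiv.Perm (Fin n) => (σ i', σ j') = p').card := by
  obtain ⟨τ, hτ1, hτ2⟩ := exists_perm_map_pair hp hp'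
  obtain ⟨ρ, hρ1, hρ2⟩ := exists_perm_map_pair hij' hij
  have hρ1' : ρ⁻¹ i = i' := by rw [← hρ1, Equiv.Perm.inv_def, Equiv.symm_apply_apply]
  have hρ2' : ρ⁻¹ j = j' := by rw [← hρ2, Equiv.Perm.inv_def, Equiv.symm_apply_apply]
  have hτ1' : τ⁻¹ p'.1 = p.1 := by rw [← hτ1, Equiv.Perm.inv_def, Equiv.symm_apply_apply]
  have hτ2' : τ⁻¹ p'.2 = p.2 := by rw [← hτ2, Equiv.Perm.inv_def, Equiv.symm_apply_apply]
  refine Finset.card_bij' (fun σ _ => τ * σ * ρ) (fun σ _ => τ⁻¹ * σ * ρ⁻¹) ?_ ?_ ?_ ?_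
  · intro σ hσ
    simp only [Finset.mem_filter, Finset.mem_univ, true_and, Prod.mk.injEq] at hσ ⊢
    obtain ⟨h1, h2⟩ := Prod.mk.injEq _ _ _ _ ▸ hσ
    rw [Prod.ext_iff]
    constructor
    · simp [Equiv.Perm.mul_apply, hρ1, h1, hτ1]
    · simp [Equiv.Perm.mul_apply, hρ2, h2, hτ2]
  · intro σ hσ
    simp only [Finset.mem_filter, Finset.mem_univ, true_and, Prod.mk.injEq] at hσ ⊢
    obtain ⟨h1, h2⟩ := Prod.mk.injEq _ _ _ _ ▸ hσ
    rw [Prod.ext_iff]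
    constructor
    · simp [Equiv.Perm.mul_apply, hρ1', h1, hτ1']
    · simp [Equiv.Perm.mul_apply, hρ2', h2, hτ2']
  · intro σ _
    ext t
    simp [Equiv.Perm.mul_apply]
  · intro σ _
    ext t
    simp [Equiv.Perm.mul_apply]

/-- Summing a function of `σ i` over all permutations, expressed fiberwise. -/
lemma sum_perm_fiber {n : ℕ} {M : Type*} [AddCommMonoid M] (i : Fin n) (F : Fin n → M) :
    ∑ σ : Equiv.Perm (Fin n), F (σ i)
      = ∑ x : Fin n, (Finset.univ.filter fun σ : Equiv.Perm (Fin n) => σ i = x).card • F x := by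
  rw [← Finset.sum_fiberwise' Finset.univ (fun σ : Equiv.Perm (Fin n) => σ i) F]
  exact Finset.sum_congr rfl fun x _ => by rw [Finset.sum_const]

lemma sum_perm_const_fiber {n : ℕ} {M : Type*} [AddCommMonoid M] (i i₀ : Fin n) (F : Fin n → M) :
    ∑ σ : Equiv.Perm (Fin n), F (σ i)
      = (Finset.univ.filter fun σ : Equiv.Perm (Fin n) => σ i₀ = i₀).card • ∑ x : Fin n, F x := by
  rw [sum_perm_fiber]
  rw [Finset.smul_sum]
  exact Finset.sum_congr rfl fun x _ => by rw [fiber1_card_eq i x i₀ i₀]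

/-- Summing a function of `(σ i, σ j)` over all permutations, fiberwise over the off-diagonal. -/
lemma sum_perm_fiber2 {n : ℕ} {M : Type*} [AddCommMonoid M] {i j : Fin n} (hij : i ≠ j)
    (F : Fin n → Fin n → M) :
    ∑ σ : Equiv.Perm (Fin n), F (σ i) (σ j)
      = ∑ p ∈ (Finset.univ : Finset (Fin n)).offDiag,
          (Finset.univ.filter fun σ : Equiv.Perm (Fin n) => (σ i, σ j) = p).card • F p.1 p.2 := by
  have h1 : ∑ σ : Equiv.Perm (Fin n), F (σ i) (σ j)
      = ∑ p : Fin n × Fin n,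
          (Finset.univ.filter fun σ : Equiv.Perm (Fin n) => (σ i, σ j) = p).card • F p.1 p.2 := by
    rw [← Finset.sum_fiberwise' Finset.univ (fun σ : Equiv.Perm (Fin n) => (σ i, σ j))
      (fun p => F p.1 p.2)]
    exact Finset.sum_congr rfl fun p _ => by rw [Finset.sum_const]
  have h2 : (Finset.univ : Finset (Fin n × Fin n))
      = (Finset.univ : Finset (Fin n)).diag ∪ (Finset.univ : Finset (Fin n)).offDiag := by
    rw [Finset.diag_union_offDiag, Finset.univ_product_univ]
  rw [h1, h2, Finset.sum_union (Finset.disjoint_diag_offDiag _)]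
  have h3 : ∑ p ∈ (Finset.univ : Finset (Fin n)).diag,
      (Finset.univ.filter fun σ : Equiv.Perm (Fin n) => (σ i, σ j) = p).card • F p.1 p.2 = 0 := by
    rw [Finset.sum_diag]
    refine Finset.sum_eq_zero fun x _ => ?_
    have hempty : (Finset.univ.filter fun σ : Equiv.Perm (Fin n) => (σ i, σ j) = (x, x)) = ∅ := by
      refine Finset.filter_eq_empty_iff.2 fun σ _ => ?_
      intro hc
      obtain ⟨h1', h2'⟩ := Prod.mk.injEq _ _ _ _ ▸ hc
      exact hij (σ.injective (h1'.trans h2'.symm))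
    rw [hempty]
    simp
  rw [h3, zero_add]

/-- Fiberwise sum over `s`. -/
lemma sum_sfiber {n d q : ℕ} {s : Fin n → Fin d}
    (hs : ∀ k : Fin d, (Finset.univ.filter (fun i : Fin n => s i = k)).card = q)
    {M : Type*} [AddCommMonoid M] (F : Fin d → M) :
    ∑ x : Fin n, F (s x) = ∑ k : Fin d, q • F k := by
  rw [← Finset.sum_fiberwise' Finset.univ s F]
  exact Finset.sum_congr rfl fun k _ => by rw [Finset.sum_const, hs k]

lemma sum_sfiber_real {n d q : ℕ} {s : Fin n → Fin d}
    (hs : ∀ k : Fin d, (Finset.univ.filter (fun i : Fin n => s i = k)).card = q)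
    (F : Fin d → ℝ) :
    ∑ x : Fin n, F (s x) = (q : ℝ) * ∑ k : Fin d, F k := by
  rw [sum_sfiber hs F, Finset.mul_sum]
  exact Finset.sum_congr rfl fun k _ => by rw [nsmul_eq_mul]

lemma sum_single_scaled {n d q : ℕ} (hn : n = q * d) {s : Fin n → Fin d}
    (hs : ∀ k : Fin d, (Finset.univ.filter (fun i : Fin n => s i = k)).card = q)
    (v : EuclideanSpace ℝ (Fin d)) :
    ∑ x : Fin n, (d : ℝ) • EuclideanSpace.single (s x) (v (s x)) = (n : ℝ) • v := by
  rw [sum_sfiber hs (fun k => (d : ℝ) • EuclideanSpace.single k (v k))]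
  ext m
  rw [WithLp.ofLp_sum, Finset.sum_apply m Finset.univ
    (fun k => (q • ((d : ℝ) • EuclideanSpace.single k (v k))).ofLp)]
  have h : ∀ k : Fin d, (q • ((d : ℝ) • EuclideanSpace.single k (v k))) m
      = if m = k then (q : ℝ) * ((d : ℝ) * v k) else 0 := by
    intro k
    rw [← Nat.cast_smul_eq_nsmul ℝ]
    simp [PiLp.smul_apply, EuclideanSpace.single_apply, mul_ite]
  rw [Finset.sum_congr rfl fun k _ => h k, Finset.sum_ite_eq]
  simp only [Finset.mem_univ, if_true, PiLp.smul_apply, smul_eq_mul]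
  rw [hn]
  push_cast
  ring

lemma inner_scaled_single {d : ℕ} (k l : Fin d) (c e : ℝ) :
    (inner ℝ ((d : ℝ) • EuclideanSpace.single k c) ((d : ℝ) • EuclideanSpace.single l e) : ℝ)
      = if k = l then (d : ℝ) ^ 2 * (c * e) else 0 := by
  rw [real_inner_smul_left, real_inner_smul_right, EuclideanSpace.inner_single_left]
  simp only [EuclideanSpace.single_apply, starRingEnd_apply, star_trivial]
  split_ifs with h <;> ring

lemma coord_sum_sq {d : ℕ} (v : EuclideanSpace ℝ (Fin d)) :
    ∑ k, v k * v k = ‖v‖ ^ 2 := by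
  rw [← real_inner_self_eq_norm_sq]
  simp only [PiLp.inner_apply, RCLike.inner_apply, conj_trivial]

/-- Splitting a double sum into a diagonal and off-diagonal part. -/
lemma sum_split_diag {n : ℕ} (X : Fin n → Fin n → ℝ) :
    ∑ i : Fin n, ∑ j : Fin n, X i j
      = (∑ i : Fin n, X i i) + ∑ p ∈ (Finset.univ : Finset (Fin n)).offDiag, X p.1 p.2 := by
  have h1 : ∑ p ∈ (Finset.univ : Finset (Fin n)) ×ˢ Finset.univ, X p.1 p.2
      = ∑ i : Fin n, ∑ j : Fin n, X i j := Finset.sum_product' _ _ _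
  rw [← h1, ← Finset.diag_union_offDiag (Finset.univ : Finset (Fin n)),
    Finset.sum_union (Finset.disjoint_diag_offDiag _), Finset.sum_diag]

/-- Compressor for the case `n = q·d`: `s : {1,…,n} → {1,…,d}` encodes the multiset
`S = {1,…,1,2,…,2,…,d,…,d}` (each value attained exactly `q` times), and for a
permutation `σ` of `{1,…,n}`, device `i` keeps the single coordinate `s(σ(i))`
rescaled by `d`. -/
def QpermBig (n d : ℕ) (s : Fin n → Fin d) (σ : Equiv.Perm (Fin n)) (i : Fin n)
    (u : EuclideanSpace ℝ (Fin d)) : EuclideanSpace ℝ (Fin d) :=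
  (d : ℝ) • EuclideanSpace.single (s (σ i)) (u (s (σ i)))

set_option maxHeartbeats 4000000 in
/-- in the case `n = q·d > 1`, the compressors `Q_i^σ` are
(a) unbiased, and (b) satisfy the variance bound
`E_σ ‖(1/n)∑ᵢ Q_i^σ(aᵢ) − ā‖² ≤ (1/n)∑ᵢ ‖aᵢ − ā‖²`. -/
theorem perm_compressor_big_n_unbiased_and_variance
    (d q n : ℕ) (hd : 1 ≤ d) (hq : 1 ≤ q) (hn : n = q * d) (hn1 : 1 < n)
    (s : Fin n → Fin d)
    (hs : ∀ k : Fin d, (Finset.univ.filter (fun i : Fin n => s i = k)).card = q) :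
    (∀ (u : EuclideanSpace ℝ (Fin d)) (i : Fin n),
        (Fintype.card (Equiv.Perm (Fin n)) : ℝ)⁻¹ •
            ∑ σ : Equiv.Perm (Fin n), QpermBig n d s σ i u = u) ∧
    (∀ a : Fin n → EuclideanSpace ℝ (Fin d),
        (Fintype.card (Equiv.Perm (Fin n)) : ℝ)⁻¹ *
            ∑ σ : Equiv.Perm (Fin n),
              ‖(n : ℝ)⁻¹ • ∑ i, QpermBig n d s σ i (a i) - (n : ℝ)⁻¹ • ∑ j, a j‖ ^ 2
          ≤ (n : ℝ)⁻¹ * ∑ i, ‖a i - (n : ℝ)⁻¹ • ∑ j, a j‖ ^ 2) := by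
  classical
  have hn0 : 0 < n := Nat.lt_of_lt_of_le Nat.zero_lt_one hn1.le
  have hnR : (n : ℝ) ≠ 0 := Nat.cast_ne_zero.2 hn0.ne'
  have hdn : d ≤ n := by rw [hn]; exact Nat.le_mul_of_pos_left d hq
  have hcardpos : 0 < Fintype.card (Equiv.Perm (Fin n)) := Fintype.card_pos
  have hcardR : (Fintype.card (Equiv.Perm (Fin n)) : ℝ) ≠ 0 := Nat.cast_ne_zero.2 hcardpos.ne'
  let i₀ : Fin n := ⟨0, hn0⟩
  let j₀ : Fin n := ⟨1, hn1⟩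
  have hij₀ : i₀ ≠ j₀ := fun h => by simpa using congrArg Fin.val h
  set C1 : ℕ := (Finset.univ.filter fun σ : Equiv.Perm (Fin n) => σ i₀ = i₀).card with hC1
  have hcard_eq : Fintype.card (Equiv.Perm (Fin n)) = n * C1 := by
    rw [← Finset.card_univ,
      Finset.card_eq_sum_card_fiberwise (f := fun σ : Equiv.Perm (Fin n) => σ i₀)
        (t := Finset.univ) (fun _ _ => Finset.mem_univ _)]
    rw [Finset.sum_congr rfl fun x _ => fiber1_card_eq i₀ x i₀ i₀]
    rw [Finset.sum_const, Finset.card_univ, Fintype.card_fin, smul_eq_mul]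
  have hC1ne : (C1 : ℝ) ≠ 0 := by
    have h0 : C1 ≠ 0 := by
      intro h
      rw [hcard_eq, h, mul_zero] at hcardpos
      exact lt_irrefl 0 hcardpos
    exact_mod_cast h0
  have hscalar : (Fintype.card (Equiv.Perm (Fin n)) : ℝ)⁻¹ * (C1 : ℝ) * (n : ℝ) = 1 := by
    rw [hcard_eq]
    push_cast
    field_simp
  constructor
  · -- unbiasedness
    intro u i
    have h1 : ∑ σ : Equiv.Perm (Fin n), QpermBig n d s σ i u
        = C1 • ∑ x : Fin n, (d : ℝ) • EuclideanSpace.single (s x) (u (s x)) :=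
      sum_perm_const_fiber i i₀ (fun x => (d : ℝ) • EuclideanSpace.single (s x) (u (s x)))
    rw [h1, sum_single_scaled hn hs u, ← Nat.cast_smul_eq_nsmul ℝ C1, smul_smul, smul_smul,
      hscalar, one_smul]
  · -- variance bound
    intro a
    set abar : EuclideanSpace ℝ (Fin d) := (n : ℝ)⁻¹ • ∑ j, a j with habar
    set b : Fin n → EuclideanSpace ℝ (Fin d) := fun i => a i - abar with hb
    set C2 : ℕ :=
      (Finset.univ.filter fun σ : Equiv.Perm (Fin n) => (σ i₀, σ j₀) = (i₀, j₀)).card with hC2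
    have hbsum : ∑ i, b i = 0 := by
      simp only [hb]
      rw [Finset.sum_sub_distrib, Finset.sum_const, Finset.card_univ, Fintype.card_fin, habar,
        ← Nat.cast_smul_eq_nsmul ℝ, smul_smul, mul_inv_cancel₀ hnR, one_smul, sub_self]
    have hreduce : ∀ σ : Equiv.Perm (Fin n),
        (n : ℝ)⁻¹ • ∑ i, QpermBig n d s σ i (a i) - abar
          = (n : ℝ)⁻¹ • ∑ i, QpermBig n d s σ i (b i) := by
      intro σ
      have hsplit : ∀ i, QpermBig n d s σ i (a i)
          = QpermBig n d s σ i (b i) + QpermBig n d s σ i abar := by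
        intro i
        simp only [QpermBig, hb]
        rw [← smul_add]
        congr 1
        ext m
        simp only [PiLp.add_apply, EuclideanSpace.single_apply, PiLp.sub_apply]
        split_ifs <;> ring
      have h2 : ∑ i, QpermBig n d s σ i abar = (n : ℝ) • abar := by
        have e : ∑ i, QpermBig n d s σ i abar
            = ∑ x : Fin n, (d : ℝ) • EuclideanSpace.single (s x) (abar (s x)) :=
          Equiv.sum_comp σ (fun x => (d : ℝ) • EuclideanSpace.single (s x) (abar (s x)))
        rw [e, sum_single_scaled hn hs abar]
      have h3 : ∑ i, QpermBig n d s σ i (a i)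
          = (∑ i, QpermBig n d s σ i (b i)) + (n : ℝ) • abar := by
        rw [← h2, ← Finset.sum_add_distrib]
        exact Finset.sum_congr rfl fun i _ => hsplit i
      rw [h3, smul_add, smul_smul, inv_mul_cancel₀ hnR, one_smul, add_sub_cancel_right]
    have hrw : ∀ σ : Equiv.Perm (Fin n),
        ‖(n : ℝ)⁻¹ • ∑ i, QpermBig n d s σ i (a i) - abar‖ ^ 2
          = ((n : ℝ)⁻¹) ^ 2 * ‖∑ i, QpermBig n d s σ i (b i)‖ ^ 2 := by
      intro σ
      rw [hreduce σ, norm_smul, mul_pow, Real.norm_eq_abs, sq_abs]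
    -- the key second-moment bound
    have hS : (0 : ℝ) ≤ ∑ i, ‖b i‖ ^ 2 := Finset.sum_nonneg fun i _ => sq_nonneg _
    have hkey : ∑ σ : Equiv.Perm (Fin n), ‖∑ i, QpermBig n d s σ i (b i)‖ ^ 2
        ≤ (Fintype.card (Equiv.Perm (Fin n)) : ℝ) * (d : ℝ) * ∑ i, ‖b i‖ ^ 2 := by
      have hsq : ∀ σ : Equiv.Perm (Fin n), ‖∑ i, QpermBig n d s σ i (b i)‖ ^ 2
          = ∑ i, ∑ j,
              (inner ℝ (QpermBig n d s σ i (b i)) (QpermBig n d s σ j (b j)) : ℝ) := by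
        intro σ
        rw [← real_inner_self_eq_norm_sq, sum_inner]
        exact Finset.sum_congr rfl fun i _ => inner_sum _ _ _
      have hinner : ∀ (σ : Equiv.Perm (Fin n)) (i j : Fin n),
          (inner ℝ (QpermBig n d s σ i (b i)) (QpermBig n d s σ j (b j)) : ℝ)
            = if s (σ i) = s (σ j) then
                (d : ℝ) ^ 2 * (b i (s (σ i)) * b j (s (σ j))) else 0 := fun σ i j =>
        inner_scaled_single (s (σ i)) (s (σ j)) (b i (s (σ i))) (b j (s (σ j)))
      have step1 : ∑ σ : Equiv.Perm (Fin n), ‖∑ i, QpermBig n d s σ i (b i)‖ ^ 2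
          = ∑ i, ∑ j, ∑ σ : Equiv.Perm (Fin n),
              (if s (σ i) = s (σ j) then
                (d : ℝ) ^ 2 * (b i (s (σ i)) * b j (s (σ j))) else 0) := by
        rw [Finset.sum_congr rfl fun σ _ => (hsq σ).trans
          (Finset.sum_congr rfl fun i _ => Finset.sum_congr rfl fun j _ => hinner σ i j)]
        rw [Finset.sum_comm]
        exact Finset.sum_congr rfl fun i _ => Finset.sum_comm
      -- diagonal part
      have hdiag : ∀ i : Fin n, (∑ σ : Equiv.Perm (Fin n),
          (if s (σ i) = s (σ i) then
            (d : ℝ) ^ 2 * (b i (s (σ i)) * b i (s (σ i))) else 0))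
          = (Fintype.card (Equiv.Perm (Fin n)) : ℝ) * (d : ℝ) * ‖b i‖ ^ 2 := by
        intro i
        have e1 : (∑ σ : Equiv.Perm (Fin n),
            (if s (σ i) = s (σ i) then
              (d : ℝ) ^ 2 * (b i (s (σ i)) * b i (s (σ i))) else 0))
            = ∑ σ : Equiv.Perm (Fin n), (d : ℝ) ^ 2 * (b i (s (σ i)) * b i (s (σ i))) :=
          Finset.sum_congr rfl fun σ _ => if_pos rfl
        have e2 : ∑ σ : Equiv.Perm (Fin n), (d : ℝ) ^ 2 * (b i (s (σ i)) * b i (s (σ i)))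
            = C1 • ∑ x : Fin n, (d : ℝ) ^ 2 * (b i (s x) * b i (s x)) :=
          sum_perm_const_fiber i i₀ (fun x => (d : ℝ) ^ 2 * (b i (s x) * b i (s x)))
        have e3 : ∑ x : Fin n, (d : ℝ) ^ 2 * (b i (s x) * b i (s x))
            = (q : ℝ) * ∑ k : Fin d, (d : ℝ) ^ 2 * (b i k * b i k) :=
          sum_sfiber_real hs (fun k => (d : ℝ) ^ 2 * (b i k * b i k))
        rw [e1, e2, e3, ← Nat.cast_smul_eq_nsmul ℝ, smul_eq_mul, ← Finset.mul_sum,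
          coord_sum_sq, hcard_eq, hn]
        push_cast
        ring
      -- off-diagonal part
      have hoff : ∀ i j : Fin n, i ≠ j →
          (∑ σ : Equiv.Perm (Fin n),
            (if s (σ i) = s (σ j) then
              (d : ℝ) ^ 2 * (b i (s (σ i)) * b j (s (σ j))) else 0))
          = (C2 : ℝ) * (((d : ℝ) ^ 2 * ((q : ℝ) ^ 2 - (q : ℝ))) * ∑ k, b i k * b j k) := by
        intro i j hij
        have e1 : (∑ σ : Equiv.Perm (Fin n),
            (if s (σ i) = s (σ j) then
              (d : ℝ) ^ 2 * (b i (s (σ i)) * b j (s (σ j))) else 0))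
            = ∑ p ∈ (Finset.univ : Finset (Fin n)).offDiag,
                (Finset.univ.filter fun σ : Equiv.Perm (Fin n) => (σ i, σ j) = p).card
                  • (if s p.1 = s p.2 then (d : ℝ) ^ 2 * (b i (s p.1) * b j (s p.2)) else 0) :=
          sum_perm_fiber2 hij
            (fun x y => if s x = s y then (d : ℝ) ^ 2 * (b i (s x) * b j (s y)) else 0)
        have e2 : ∀ p ∈ (Finset.univ : Finset (Fin n)).offDiag,
            (Finset.univ.filter fun σ : Equiv.Perm (Fin n) => (σ i, σ j) = p).card
              • (if s p.1 = s p.2 then (d : ℝ) ^ 2 * (b i (s p.1) * b j (s p.2)) else 0)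
            = (C2 : ℝ) *
                (if s p.1 = s p.2 then (d : ℝ) ^ 2 * (b i (s p.1) * b j (s p.2)) else 0) := by
          intro p hp
          rw [Finset.mem_offDiag] at hp
          have hcc : (Finset.univ.filter fun σ : Equiv.Perm (Fin n) => (σ i, σ j) = p).card
              = C2 := by
            rw [hC2]
            exact fiber2_card_eq hij hp.2.2 hij₀ hij₀
          rw [hcc, ← Nat.cast_smul_eq_nsmul ℝ, smul_eq_mul]
        rw [e1, Finset.sum_congr rfl e2, ← Finset.mul_sum]
        congr 1
        -- ∑ over offDiag of the indicator kernel
        have e4 : ∀ x : Fin n,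
            (∑ y : Fin n, if s x = s y then (d : ℝ) ^ 2 * (b i (s x) * b j (s y)) else 0)
            = (q : ℝ) * ((d : ℝ) ^ 2 * (b i (s x) * b j (s x))) := by
          intro x
          refine (sum_sfiber_real hs
            (fun l => if s x = l then (d : ℝ) ^ 2 * (b i (s x) * b j l) else 0)).trans ?_
          rw [Finset.sum_ite_eq]
          simp
        have etot : (∑ x : Fin n, ∑ y : Fin n,
            if s x = s y then (d : ℝ) ^ 2 * (b i (s x) * b j (s y)) else 0)
            = (q : ℝ) * ((q : ℝ) * ((d : ℝ) ^ 2 * ∑ k, b i k * b j k)) := by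
          refine (Finset.sum_congr rfl fun x _ => e4 x).trans ?_
          refine (sum_sfiber_real hs
            (fun k => (q : ℝ) * ((d : ℝ) ^ 2 * (b i k * b j k)))).trans ?_
          simp only [← Finset.mul_sum]
        have ediag : (∑ x : Fin n,
            (if s x = s x then (d : ℝ) ^ 2 * (b i (s x) * b j (s x)) else 0))
            = (q : ℝ) * ((d : ℝ) ^ 2 * ∑ k, b i k * b j k) := by
          refine (Finset.sum_congr rfl fun x _ => if_pos rfl).trans ?_
          refine (sum_sfiber_real hs
            (fun k => (d : ℝ) ^ 2 * (b i k * b j k))).trans ?_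
          simp only [← Finset.mul_sum]
        have esplit : (∑ x : Fin n, ∑ y : Fin n,
              if s x = s y then (d : ℝ) ^ 2 * (b i (s x) * b j (s y)) else 0)
            = (∑ x : Fin n, if s x = s x then (d : ℝ) ^ 2 * (b i (s x) * b j (s x)) else 0)
              + ∑ p ∈ (Finset.univ : Finset (Fin n)).offDiag,
                  (if s p.1 = s p.2 then (d : ℝ) ^ 2 * (b i (s p.1) * b j (s p.2)) else 0) :=
          sum_split_diag _
        rw [etot, ediag] at esplit
        have : (∑ p ∈ (Finset.univ : Finset (Fin n)).offDiag,
            if s p.1 = s p.2 then (d : ℝ) ^ 2 * (b i (s p.1) * b j (s p.2)) else 0)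
            = (q : ℝ) * ((q : ℝ) * ((d : ℝ) ^ 2 * ∑ k, b i k * b j k))
              - (q : ℝ) * ((d : ℝ) ^ 2 * ∑ k, b i k * b j k) := by
          linarith [esplit]
        rw [this]; ring
      -- sum of cross terms is nonpositive
      have hcoord : ∀ k : Fin d, ∑ j : Fin n, b j k = 0 := by
        intro k
        have h := congrArg (fun v : EuclideanSpace ℝ (Fin d) => v k) hbsum
        simpa using h
      have hTsum : ∑ p ∈ (Finset.univ : Finset (Fin n)).offDiag,
          (∑ k, b p.1 k * b p.2 k) = - ∑ i, ‖b i‖ ^ 2 := by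
        have h1 : ∑ i : Fin n, ∑ j : Fin n, (∑ k, b i k * b j k) = 0 := by
          refine Finset.sum_eq_zero fun i _ => ?_
          rw [Finset.sum_comm]
          refine Finset.sum_eq_zero fun k _ => ?_
          rw [← Finset.mul_sum, hcoord k, mul_zero]
        have h2 : (∑ i : Fin n, ∑ j : Fin n, (∑ k, b i k * b j k : ℝ))
            = (∑ i : Fin n, (∑ k, b i k * b i k : ℝ))
              + ∑ p ∈ (Finset.univ : Finset (Fin n)).offDiag, (∑ k, b p.1 k * b p.2 k : ℝ) :=
          sum_split_diag _
        rw [h1] at h2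
        have h3 : ∑ i : Fin n, (∑ k, b i k * b i k) = ∑ i, ‖b i‖ ^ 2 :=
          Finset.sum_congr rfl fun i _ => coord_sum_sq (b i)
        rw [h3] at h2
        linarith
      -- assemble
      have hassemble : (∑ i : Fin n, ∑ j : Fin n, ∑ σ : Equiv.Perm (Fin n),
            (if s (σ i) = s (σ j) then (d : ℝ) ^ 2 * (b i (s (σ i)) * b j (s (σ j))) else 0))
          = (∑ i : Fin n, ∑ σ : Equiv.Perm (Fin n),
              (if s (σ i) = s (σ i) then (d : ℝ) ^ 2 * (b i (s (σ i)) * b i (s (σ i))) else 0))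
            + ∑ p ∈ (Finset.univ : Finset (Fin n)).offDiag,
                (∑ σ : Equiv.Perm (Fin n),
                  (if s (σ p.1) = s (σ p.2) then
                    (d : ℝ) ^ 2 * (b p.1 (s (σ p.1)) * b p.2 (s (σ p.2))) else 0)) :=
        sum_split_diag _
      rw [step1, hassemble]
      have hd1 : ∑ i, (∑ σ : Equiv.Perm (Fin n),
          (if s (σ i) = s (σ i) then (d : ℝ) ^ 2 * (b i (s (σ i)) * b i (s (σ i))) else 0))
          = (Fintype.card (Equiv.Perm (Fin n)) : ℝ) * (d : ℝ) * ∑ i, ‖b i‖ ^ 2 := by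
        rw [Finset.sum_congr rfl fun i _ => hdiag i, ← Finset.mul_sum]
      have ho1 : ∑ p ∈ (Finset.univ : Finset (Fin n)).offDiag,
          (∑ σ : Equiv.Perm (Fin n),
            (if s (σ p.1) = s (σ p.2) then
              (d : ℝ) ^ 2 * (b p.1 (s (σ p.1)) * b p.2 (s (σ p.2))) else 0))
          = (C2 : ℝ) * ((d : ℝ) ^ 2 * ((q : ℝ) ^ 2 - (q : ℝ))) * (- ∑ i, ‖b i‖ ^ 2) := by
        have := Finset.sum_congr rfl fun (p : Fin n × Fin n)
          (hp : p ∈ (Finset.univ : Finset (Fin n)).offDiag) =>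
            hoff p.1 p.2 (Finset.mem_offDiag.1 hp).2.2
        rw [this, ← Finset.mul_sum, ← Finset.mul_sum, hTsum]
        ring
      rw [hd1, ho1]
      have hq1 : (1 : ℝ) ≤ (q : ℝ) := by exact_mod_cast hq
      have hnonneg : 0 ≤ (C2 : ℝ) * ((d : ℝ) ^ 2 * ((q : ℝ) ^ 2 - (q : ℝ))) := by
        apply mul_nonneg (Nat.cast_nonneg _)
        apply mul_nonneg (sq_nonneg _)
        nlinarith
      nlinarith [mul_nonneg hnonneg hS]
    -- conclude
    have hgoal1 : (Fintype.card (Equiv.Perm (Fin n)) : ℝ)⁻¹ *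
        ∑ σ : Equiv.Perm (Fin n),
          ‖(n : ℝ)⁻¹ • ∑ i, QpermBig n d s σ i (a i) - abar‖ ^ 2
        = (Fintype.card (Equiv.Perm (Fin n)) : ℝ)⁻¹ * ((n : ℝ)⁻¹) ^ 2 *
            ∑ σ : Equiv.Perm (Fin n), ‖∑ i, QpermBig n d s σ i (b i)‖ ^ 2 := by
      rw [Finset.sum_congr rfl fun σ _ => hrw σ, ← Finset.mul_sum, mul_assoc]
    have hfinal : (Fintype.card (Equiv.Perm (Fin n)) : ℝ)⁻¹ *
        ∑ σ : Equiv.Perm (Fin n),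
          ‖(n : ℝ)⁻¹ • ∑ i, QpermBig n d s σ i (a i) - abar‖ ^ 2
        ≤ (n : ℝ)⁻¹ * ∑ i, ‖b i‖ ^ 2 := by
      rw [hgoal1]
      have step : (Fintype.card (Equiv.Perm (Fin n)) : ℝ)⁻¹ * ((n : ℝ)⁻¹) ^ 2 *
            ∑ σ : Equiv.Perm (Fin n), ‖∑ i, QpermBig n d s σ i (b i)‖ ^ 2
          ≤ (Fintype.card (Equiv.Perm (Fin n)) : ℝ)⁻¹ * ((n : ℝ)⁻¹) ^ 2 *
            ((Fintype.card (Equiv.Perm (Fin n)) : ℝ) * (d : ℝ) * ∑ i, ‖b i‖ ^ 2) :=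
        mul_le_mul_of_nonneg_left hkey (by positivity)
      refine step.trans ?_
      have hrew : (Fintype.card (Equiv.Perm (Fin n)) : ℝ)⁻¹ * ((n : ℝ)⁻¹) ^ 2 *
          ((Fintype.card (Equiv.Perm (Fin n)) : ℝ) * (d : ℝ) * ∑ i, ‖b i‖ ^ 2)
          = ((d : ℝ) * ((n : ℝ)⁻¹) ^ 2) * ∑ i, ‖b i‖ ^ 2 := by
        have hc : (Fintype.card (Equiv.Perm (Fin n)) : ℝ)⁻¹ *
            (Fintype.card (Equiv.Perm (Fin n)) : ℝ) = 1 := inv_mul_cancel₀ hcardR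
        calc (Fintype.card (Equiv.Perm (Fin n)) : ℝ)⁻¹ * ((n : ℝ)⁻¹) ^ 2 *
            ((Fintype.card (Equiv.Perm (Fin n)) : ℝ) * (d : ℝ) * ∑ i, ‖b i‖ ^ 2)
            = ((Fintype.card (Equiv.Perm (Fin n)) : ℝ)⁻¹ *
                (Fintype.card (Equiv.Perm (Fin n)) : ℝ)) *
                (((d : ℝ) * ((n : ℝ)⁻¹) ^ 2) * ∑ i, ‖b i‖ ^ 2) := by ring
          _ = ((d : ℝ) * ((n : ℝ)⁻¹) ^ 2) * ∑ i, ‖b i‖ ^ 2 := by rw [hc, one_mul]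
      rw [hrew]
      apply mul_le_mul_of_nonneg_right _ hS
      have hd_le : (d : ℝ) ≤ (n : ℝ) := by exact_mod_cast hdn
      have hnpos : (0 : ℝ) < (n : ℝ) := by positivity
      rw [sq, ← mul_assoc]
      have h1 : (d : ℝ) * (n : ℝ)⁻¹ ≤ 1 := by
        rw [← div_eq_mul_inv]
        exact (div_le_one hnpos).2 hd_le
      calc (d : ℝ) * (n : ℝ)⁻¹ * (n : ℝ)⁻¹ ≤ 1 * (n : ℝ)⁻¹ :=
            mul_le_mul_of_nonneg_right h1 (by positivity)
        _ = (n : ℝ)⁻¹ := one_mul _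
    simpa only [hb] using hfinal
end
end

section
/- Let n ≥ 1, q ≥ 1 be integers and d = q·n. For all vectors a_1, …, a_n ∈ ℝ^d, the permutation compressors satisfy the second-moment bound: E_π‖ (1/n)∑_{i=1}^n Q_i^π(a_i) ‖² ≤ (1/n)∑_{i=1}^n ‖a_i‖². -/
noncomputable section

/-- coordinate of a sum of singles over a permutation -/
lemma sum_single_apply {d : ℕ} (π : Equiv.Perm (Fin d)) (c : Fin d → ℝ) (k : Fin d) :
    (∑ j, EuclideanSpace.single (π j) (c j)) k = c (π.symm k) := by
  classical
  rw [WithLp.ofLp_sum, Finset.sum_apply k Finset.univ _, Finset.sum_eq_single (π.symm k)]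
  · simp
  · intro j _ hj
    rw [EuclideanSpace.single_apply, if_neg]
    intro h
    exact hj (by rw [h, Equiv.symm_apply_apply])
  · simp

lemma enorm_sq {d : ℕ} (x : EuclideanSpace ℝ (Fin d)) : ‖x‖^2 = ∑ k, (x k)^2 := by
  rw [EuclideanSpace.norm_eq, Real.sq_sqrt (by positivity)]
  simp [sq_abs]

lemma norm_sum_single_sq {d : ℕ} (π : Equiv.Perm (Fin d)) (c : Fin d → ℝ) :
    ‖∑ j, EuclideanSpace.single (π j) (c j)‖^2 = ∑ j, (c j)^2 := by
  rw [enorm_sq]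
  rw [show (∑ k, ((∑ j, EuclideanSpace.single (π j) (c j)) k)^2)
      = ∑ k, (c (π.symm k))^2 from
    Finset.sum_congr rfl fun k _ => by rw [sum_single_apply]]
  exact Equiv.sum_comp π.symm (fun j => (c j)^2)

lemma sum_perm_apply {d : ℕ} (f : Fin d → ℝ) (j : Fin d) :
    (d : ℝ) * ∑ π : Equiv.Perm (Fin d), f (π j)
      = (Nat.factorial d : ℝ) * ∑ k, f k := by
  classical
  have hind : ∀ j' : Fin d, ∑ π : Equiv.Perm (Fin d), f (π j')
      = ∑ π : Equiv.Perm (Fin d), f (π j) := by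
    intro j'
    exact Fintype.sum_equiv (Equiv.mulRight (Equiv.swap j' j))
      (fun π => f (π j')) (fun π => f (π j))
      (fun π => by simp [Equiv.Perm.mul_apply])
  have h1 : ∑ j' : Fin d, ∑ π : Equiv.Perm (Fin d), f (π j')
      = (d : ℝ) * ∑ π : Equiv.Perm (Fin d), f (π j) := by
    rw [Finset.sum_congr rfl (fun j' _ => hind j')]
    simp [Finset.sum_const, mul_comm]
  rw [← h1, Finset.sum_comm]
  have h2 : ∀ π : Equiv.Perm (Fin d), ∑ j' : Fin d, f (π j') = ∑ k, f k :=
    fun π => Equiv.sum_comp π f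
  rw [Finset.sum_congr rfl (fun π _ => h2 π), Finset.sum_const]
  simp [Fintype.card_perm, mul_comm]

lemma blk_fiber_sum {n q d : ℕ} (hq : 1 ≤ q) (hd : d = q * n)
    (blk : Fin d → Fin n) (hblk : ∀ j : Fin d, (blk j : ℕ) = (j : ℕ) / q)
    (g : Fin n → ℝ) :
    ∑ j : Fin d, g (blk j) = (q : ℝ) * ∑ i, g i := by
  have hnq : n * q = d := by rw [hd, Nat.mul_comm]
  rw [← Equiv.sum_comp (finProdFinEquiv.trans (finCongr hnq)) (fun j => g (blk j))]
  have key : ∀ p : Fin n × Fin q,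
      blk ((finProdFinEquiv.trans (finCongr hnq)) p) = p.1 := by
    intro p
    have hv : (((finProdFinEquiv.trans (finCongr hnq)) p : Fin d) : ℕ)
        = (p.2 : ℕ) + q * (p.1 : ℕ) := by
      simp [finProdFinEquiv]
    refine Fin.ext ?_
    rw [hblk, hv, Nat.add_mul_div_left _ _ (by omega), Nat.div_eq_of_lt p.2.isLt,
      Nat.zero_add]
  rw [Finset.sum_congr rfl (fun p _ => by rw [key p])]
  rw [Fintype.sum_prod_type]
  simp [Finset.sum_const, mul_comm, Finset.sum_mul]

/-- second-moment bound for the permutation compressors: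
`E_π ‖(1/n)∑ᵢ Q_i^π(aᵢ)‖² ≤ (1/n)∑ᵢ ‖aᵢ‖²`. -/
theorem perm_compressor_second_moment_bound
    (n q d : ℕ) (hn : 1 ≤ n) (hq : 1 ≤ q) (hd : d = q * n)
    (a : Fin n → EuclideanSpace ℝ (Fin d)) :
    (Fintype.card (Equiv.Perm (Fin d)) : ℝ)⁻¹ *
        ∑ π : Equiv.Perm (Fin d),
          ‖(n : ℝ)⁻¹ • ∑ i, Qperm n q d π i (a i)‖ ^ 2
      ≤ (n : ℝ)⁻¹ * ∑ i, ‖a i‖ ^ 2 := by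
  classical
  have hq0 : 0 < q := hq
  have hn0 : 0 < n := hn
  have hd0 : 0 < d := by rw [hd]; positivity
  have hblkdef : ∀ j : Fin d, (j : ℕ) / q < n := by
    intro j
    rw [Nat.div_lt_iff_lt_mul hq0]
    calc (j : ℕ) < d := j.isLt
    _ = n * q := by rw [hd, Nat.mul_comm]
  set blk : Fin d → Fin n := fun j => ⟨(j : ℕ) / q, hblkdef j⟩ with hblk
  -- Step 1: identify the compressed average
  have step1 : ∀ π : Equiv.Perm (Fin d),
      (n : ℝ)⁻¹ • ∑ i, Qperm n q d π i (a i)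
        = ∑ j : Fin d, EuclideanSpace.single (π j) (a (blk j) (π j)) := by
    intro π
    have h1 : ∑ i, Qperm n q d π i (a i)
        = (n : ℝ) • ∑ i : Fin n, ∑ j ∈ Finset.univ.filter
            (fun j : Fin d => q * (i : ℕ) ≤ (j : ℕ) ∧ (j : ℕ) < q * ((i : ℕ) + 1)),
          EuclideanSpace.single (π j) (a i (π j)) := by
      rw [Finset.smul_sum]
      rfl
    rw [h1, inv_smul_smul₀ (show (n : ℝ) ≠ 0 from Nat.cast_ne_zero.mpr (by omega))]
    -- identify the filters with fibers of `blk`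
    have hfilter : ∀ i : Fin n,
        (Finset.univ.filter
          (fun j : Fin d => q * (i : ℕ) ≤ (j : ℕ) ∧ (j : ℕ) < q * ((i : ℕ) + 1)))
          = Finset.univ.filter (fun j : Fin d => blk j = i) := by
      intro i
      apply Finset.filter_congr
      intro j _
      rw [hblk]
      simp only [Fin.ext_iff]
      constructor
      · rintro ⟨h1', h2'⟩
        exact Nat.div_eq_of_lt_le (by rwa [Nat.mul_comm] at h1')
          (by rwa [Nat.mul_comm] at h2')
      · intro h
        refine ⟨?_, ?_⟩
        · rw [← h]; exact Nat.mul_div_le _ q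
        · rw [← h]
          exact Nat.lt_mul_div_succ _ hq0
    calc ∑ i : Fin n, ∑ j ∈ Finset.univ.filter
            (fun j : Fin d => q * (i : ℕ) ≤ (j : ℕ) ∧ (j : ℕ) < q * ((i : ℕ) + 1)),
          EuclideanSpace.single (π j) (a i (π j))
        = ∑ i : Fin n, ∑ j ∈ Finset.univ.filter (fun j : Fin d => blk j = i),
            EuclideanSpace.single (π j) (a (blk j) (π j)) := by
          refine Finset.sum_congr rfl fun i _ => ?_
          rw [hfilter i]
          refine Finset.sum_congr rfl fun j hj => ?_
          rw [(Finset.mem_filter.mp hj).2]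
      _ = ∑ j : Fin d, EuclideanSpace.single (π j) (a (blk j) (π j)) :=
          Finset.sum_fiberwise Finset.univ blk _
  -- Step 2: norm computation and sum over π
  have step2 : ∑ π : Equiv.Perm (Fin d),
      ‖(n : ℝ)⁻¹ • ∑ i, Qperm n q d π i (a i)‖ ^ 2
      = ∑ j : Fin d, ∑ π : Equiv.Perm (Fin d), (a (blk j) (π j)) ^ 2 := by
    rw [Finset.sum_congr rfl fun π _ => by rw [step1 π, norm_sum_single_sq]]
    exact Finset.sum_comm
  set A := ∑ i, ‖a i‖ ^ 2 with hA
  set S := ∑ π : Equiv.Perm (Fin d),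
      ‖(n : ℝ)⁻¹ • ∑ i, Qperm n q d π i (a i)‖ ^ 2 with hS
  have hdS : (d : ℝ) * S = (Nat.factorial d : ℝ) * ((q : ℝ) * A) := by
    rw [step2, Finset.mul_sum]
    rw [Finset.sum_congr rfl fun j _ =>
      sum_perm_apply (fun k => (a (blk j) k) ^ 2) j]
    rw [← Finset.mul_sum]
    congr 1
    rw [show ∑ j : Fin d, ∑ k, (a (blk j) k) ^ 2 = ∑ j : Fin d, ‖a (blk j)‖ ^ 2 from
      Finset.sum_congr rfl fun j _ => (enorm_sq _).symm]
    exact blk_fiber_sum hq hd blk (fun j => rfl) (fun i => ‖a i‖ ^ 2)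
  have hcard : (Fintype.card (Equiv.Perm (Fin d)) : ℝ) = (Nat.factorial d : ℝ) := by
    rw [Fintype.card_perm, Fintype.card_fin]
  refine le_of_eq ?_
  rw [hcard]
  have hfac : (Nat.factorial d : ℝ) ≠ 0 := Nat.cast_ne_zero.mpr (Nat.factorial_ne_zero d)
  have hdc : (d : ℝ) = (q : ℝ) * n := by exact_mod_cast congrArg Nat.cast hd
  have hnne : (n : ℝ) ≠ 0 := Nat.cast_ne_zero.mpr (by omega)
  have hqne : (q : ℝ) ≠ 0 := Nat.cast_ne_zero.mpr (by omega)
  have hdne : (d : ℝ) ≠ 0 := Nat.cast_ne_zero.mpr (by omega)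
  field_simp
  apply mul_left_cancel₀ hqne
  linear_combination hdS - S * hdc
end
end

section
/- Let L, μ, δ, p, c be real numbers with 0 < μ ≤ L, δ > 0, δ·√p ≤ L, 0 < p ≤ 1/4 and c ≥ 1/L, and set γ = min{ p/(3μ), √p/(4δ), c }. Then: 2 + 4γδ²/μ + 4/(γμ) + 8γ²δ² ≤ 20L/(μp). -/
/-- the key parameter estimate for the step size `γ` of the
Three Pillars Algorithm. -/
theorem gamma_parameter_estimate
    (L μ δ p c : ℝ) (hμ : 0 < μ) (hμL : μ ≤ L) (hδ : 0 < δ)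
    (hδp : δ * Real.sqrt p ≤ L) (hp : 0 < p) (hp4 : p ≤ 1 / 4)
    (hc : 1 / L ≤ c)
    (γ : ℝ)
    (hγ : γ = min (min (p / (3 * μ)) (Real.sqrt p / (4 * δ))) c) :
    2 + 4 * γ * δ ^ 2 / μ + 4 / (γ * μ) + 8 * γ ^ 2 * δ ^ 2
      ≤ 20 * L / (μ * p) := by
  have hL : 0 < L := lt_of_lt_of_le hμ hμL
  have hsp : 0 < Real.sqrt p := Real.sqrt_pos.mpr hp
  have hsq : Real.sqrt p ^ 2 = p := Real.sq_sqrt hp.le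
  have hlow : p / (4 * L) ≤ γ := by
    rw [hγ]
    refine le_min (le_min ?_ ?_) ?_
    · rw [div_le_div_iff₀ (by positivity) (by positivity)]
      nlinarith
    · rw [div_le_div_iff₀ (by positivity) (by positivity)]
      nlinarith [mul_pos hδ hsp]
    · calc p / (4 * L) ≤ 1 / L := by
            rw [div_le_div_iff₀ (by positivity) hL]; nlinarith
        _ ≤ c := hc
  have hγpos : 0 < γ := lt_of_lt_of_le (by positivity) hlow
  have hγ1 : γ ≤ Real.sqrt p / (4 * δ) := by
    rw [hγ]; exact le_trans (min_le_left _ _) (min_le_right _ _)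
  have hγ2 : γ ≤ p / (3 * μ) := by
    rw [hγ]; exact le_trans (min_le_left _ _) (min_le_left _ _)
  have hA : 4 * (γ * δ) ≤ Real.sqrt p := by
    rw [le_div_iff₀ (by positivity)] at hγ1; linarith
  have hB : p ≤ 4 * L * γ := by
    rw [div_le_iff₀ (by positivity)] at hlow; linarith
  have hC : 3 * μ * γ ≤ p := by
    rw [le_div_iff₀ (by positivity)] at hγ2; linarith
  have hA2 : 16 * (γ * δ) ^ 2 ≤ p := by
    nlinarith [mul_pos hγpos hδ]
  have hp2 : p * p ≤ (1/4) * p := mul_le_mul_of_nonneg_right hp4 hp.le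
  have h1 := mul_le_mul_of_nonneg_right hC hp.le
  have h2 := mul_le_mul_of_nonneg_right hA2 hp.le
  have h5 := mul_le_mul_of_nonneg_right hA2 (mul_pos (mul_pos hγpos hμ) hp).le
  have h6 := mul_le_mul_of_nonneg_right hC (mul_pos hp hp).le
  have key : 2 * μ * γ * p + 4 * (γ * δ) ^ 2 * p + 4 * p + 8 * (γ * δ) ^ 2 * γ * μ * p
      ≤ 20 * L * γ := by nlinarith [mul_pos hγpos hμ, mul_pos hp hp, mul_pos hγpos hp]
  rw [show (2:ℝ) + 4 * γ * δ ^ 2 / μ + 4 / (γ * μ) + 8 * γ ^ 2 * δ ^ 2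
      = (2 * (μ * γ) + 4 * γ * δ ^ 2 * γ + 4 + 8 * γ ^ 2 * δ ^ 2 * (μ * γ)) / (μ * γ) by
        field_simp,
    div_le_div_iff₀ (by positivity) (by positivity)]
  nlinarith [mul_le_mul_of_nonneg_left key hμ.le]
end
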